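/- arXiv:2106.02970 — 6 statements merged into one kernel-verified Lean document; each statement's English description precedes it below -/
import Mathlib

section
/- Let X_1,…,X_n be independent random variables with X_i exponentially distributed with rate h_i > 0, and let 0 ≤ d_1 ≤ d_2 ≤ ⋯ ≤ d_n be real shifts. Writing H_k = h_1 + ⋯ + h_k, the expected value of min_{1≤i≤n}(X_i + d_i) equals τ̄ = Σ_{i=1}^{n-1} (e^{Σ_{j=1}^{i} h_j d_j} / H_i) · [ (1 + H_i d_i) e^{-H_i d_i} − (1 + H_i d_{i+1}) e^{-H_i d_{i+1}} ] + (e^{Σ_{j=1}^{n} h_j d_j} / H_n) · (1 + H_n d_n) e^{-H_n d_n}. (This is the expected time τ̄ between two consecutive blocks in the coordinated blockchain model, Theorem 1 of the paper, with d_i = 2 l_i the round-trip latency of miner i to the coordinator; the overall system efficiency is η^C = (1/τ̄)/H_n.) -/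
open MeasureTheory ProbabilityTheory Real

/-- `Hsum h k = h 0 + h 1 + ⋯ + h k` (partial sums of the mining rates, 0-indexed). -/
noncomputable def Hsum (h : ℕ → ℝ) (k : ℕ) : ℝ := ∑ j ∈ Finset.range (k + 1), h j

open Set


lemma my_expMeasure_Ioi {r : ℝ} (hr : 0 < r) (s : ℝ) :
    expMeasure r (Set.Ioi s) = ENNReal.ofReal (Real.exp (-(r * max s 0))) := by
  haveI := isProbabilityMeasure_expMeasure hr
  have h1 : expMeasure r (Set.Ioi s) = 1 - expMeasure r (Set.Iic s) := by
    rw [← Set.compl_Iic, measure_compl measurableSet_Iic (measure_ne_top _ _), measure_univ]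
  have h2 : cdf (expMeasure r) s = if 0 ≤ s then 1 - Real.exp (-(r*s)) else 0 :=
    cdf_expMeasure_eq hr s
  rw [h1, ← ofReal_cdf (expMeasure r) s, h2]
  rcases le_or_gt 0 s with hs | hs
  · rw [if_pos hs, max_eq_left hs]
    have he : Real.exp (-(r*s)) ≤ 1 := by
      rw [Real.exp_le_one_iff]
      nlinarith
    have : ENNReal.ofReal ((1:ℝ) - (1 - Real.exp (-(r*s))))
        = ENNReal.ofReal 1 - ENNReal.ofReal (1 - Real.exp (-(r*s))) :=
      ENNReal.ofReal_sub _ (by linarith)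
    rw [sub_sub_cancel] at this
    rw [this, ENNReal.ofReal_one]
  · rw [if_neg (not_le.mpr hs), max_eq_right hs.le, mul_zero, neg_zero, Real.exp_zero,
      ENNReal.ofReal_zero, tsub_zero, ENNReal.ofReal_one]

lemma my_expMeasure_Iio {r : ℝ} : expMeasure r (Set.Iio 0) = 0 := by
  have : expMeasure r (Set.Iio 0) = ∫⁻ y in Set.Iio (0:ℝ), exponentialPDF r y := by
    rw [expMeasure, gammaMeasure, withDensity_apply _ measurableSet_Iio]
    rfl
  rw [this, lintegral_exponentialPDF_of_nonpos le_rfl]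

lemma my_int_exp (a c : ℝ) {b : ℝ} (hb : 0 < b) :
    ∫ t in Set.Ioi a, Real.exp (c - b * t) = Real.exp (c - b * a) / b := by
  have h1 : ∀ t : ℝ, Real.exp (c - b * t) = Real.exp c * Real.exp (-(b * t)) := by
    intro t; rw [← Real.exp_add]; ring_nf
  simp_rw [h1]
  rw [integral_const_mul]
  have h2 : (∫ x in Set.Ioi a, Real.exp (-(b * x))) = Real.exp (-(b * a)) / b := by
    have h3 := integral_comp_mul_left_Ioi (fun x => Real.exp (-x)) a hb
    simp only [smul_eq_mul] at h3
    rw [h3, integral_exp_neg_Ioi]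
    ring
  rw [h2]
  ring

lemma my_int_exp_integrable (a c : ℝ) {b : ℝ} (hb : 0 < b) :
    IntegrableOn (fun t => Real.exp (c - b * t)) (Set.Ioi a) := by
  have h1 : ∀ t : ℝ, Real.exp (c - b * t) = Real.exp c * Real.exp (-b * t) := by
    intro t; rw [← Real.exp_add]; ring_nf
  simp_rw [h1]
  exact (exp_neg_integrableOn_Ioi a hb).const_mul _


lemma my_split (f : ℝ → ℝ) (a : ℝ) (ha : 0 ≤ a) (h1 : IntegrableOn f (Set.Ioc 0 a))
    (h2 : IntegrableOn f (Set.Ioi a)) :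
    ∫ t in Set.Ioi (0:ℝ), f t = (∫ t in Set.Ioc 0 a, f t) + ∫ t in Set.Ioi a, f t := by
  rw [← setIntegral_union (Set.Ioc_disjoint_Ioi le_rfl) measurableSet_Ioi h1 h2,
    Set.Ioc_union_Ioi_eq_Ioi ha]

lemma my_resolve (h d : ℕ → ℝ) (m : ℕ) (t : ℝ) (ht : ∀ i < m, d i ≤ t) :
    ∏ i ∈ Finset.range m, Real.exp (-(h i * max (t - d i) 0)) =
      Real.exp ((∑ j ∈ Finset.range m, h j * d j) - (∑ j ∈ Finset.range m, h j) * t) := by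
  rw [← Real.exp_sum]
  congr 1
  rw [Finset.sum_mul, ← Finset.sum_sub_distrib]
  refine Finset.sum_congr rfl fun i hi => ?_
  rw [max_eq_left (sub_nonneg.mpr (ht i (Finset.mem_range.mp hi)))]
  ring

lemma my_prod_cont (h d : ℕ → ℝ) (m : ℕ) :
    Continuous (fun t => ∏ i ∈ Finset.range m, Real.exp (-(h i * max (t - d i) 0))) := by
  apply continuous_finset_prod
  intro i _
  exact Real.continuous_exp.comp (by fun_prop)

lemma my_prod_integrable (h d : ℕ → ℝ) (m : ℕ) (hm : 0 < m) (hh0 : 0 < h 0)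
    (hh : ∀ i < m, 0 ≤ h i) :
    IntegrableOn (fun t => ∏ i ∈ Finset.range m, Real.exp (-(h i * max (t - d i) 0)))
      (Set.Ioi 0) := by
  have hnn : ∀ t : ℝ, 0 ≤ ∏ i ∈ Finset.range m, Real.exp (-(h i * max (t - d i) 0)) := by
    intro t; positivity
  have hbound : ∀ t : ℝ, (∏ i ∈ Finset.range m, Real.exp (-(h i * max (t - d i) 0)))
      ≤ Real.exp (h 0 * d 0) * Real.exp (-(h 0 * t)) := by
    intro t
    have h0m : (0 : ℕ) ∈ Finset.range m := Finset.mem_range.mpr hm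
    rw [← Finset.mul_prod_erase _ _ h0m]
    have hrest : (∏ i ∈ (Finset.range m).erase 0, Real.exp (-(h i * max (t - d i) 0))) ≤ 1 := by
      apply Finset.prod_le_one
      · intro i _; positivity
      · intro i hi
        rw [Real.exp_le_one_iff]
        have hi' : i < m := Finset.mem_range.mp (Finset.mem_of_mem_erase hi)
        have := hh i hi'
        have : 0 ≤ h i * max (t - d i) 0 := mul_nonneg this (le_max_right _ _)
        linarith
    calc Real.exp (-(h 0 * max (t - d 0) 0)) * ∏ i ∈ (Finset.range m).erase 0,
          Real.exp (-(h i * max (t - d i) 0))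
        ≤ Real.exp (-(h 0 * max (t - d 0) 0)) * 1 :=
          mul_le_mul_of_nonneg_left hrest (Real.exp_pos _).le
      _ = Real.exp (-(h 0 * max (t - d 0) 0)) := mul_one _
      _ ≤ Real.exp (h 0 * d 0) * Real.exp (-(h 0 * t)) := by
          rw [← Real.exp_add, Real.exp_le_exp]
          have : t - d 0 ≤ max (t - d 0) 0 := le_max_left _ _
          nlinarith [le_max_left (t - d 0) (0:ℝ)]
  have hgint : IntegrableOn (fun t => Real.exp (h 0 * d 0) * Real.exp (-(h 0 * t)))
      (Set.Ioi 0) := by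
    have h1 : ∀ t : ℝ, Real.exp (h 0 * d 0) * Real.exp (-(h 0 * t))
        = Real.exp (h 0 * d 0) * Real.exp (-(h 0) * t) := by intro t; ring_nf
    simp_rw [h1]
    exact (exp_neg_integrableOn_Ioi 0 hh0).const_mul _
  refine Integrable.mono hgint ((my_prod_cont h d m).aestronglyMeasurable.restrict) ?_
  refine Filter.Eventually.of_forall fun t => ?_
  rw [Real.norm_eq_abs, Real.norm_eq_abs, abs_of_nonneg (hnn t),
    abs_of_nonneg (by positivity)]
  exact hbound t

lemma my_alg (H0 H1 a b c0 c1 : ℝ) (hH0 : H0 ≠ 0) (hH1 : H1 ≠ 0)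
    (hrel : Real.exp c0 * Real.exp (-(H0 * b)) = Real.exp c1 * Real.exp (-(H1 * b))) :
    (Real.exp c0 / H0) * ((1 + H0 * a) * Real.exp (-(H0 * a)))
      - Real.exp c0 * Real.exp (-(H0 * b)) / H0
      + Real.exp c1 * Real.exp (-(H1 * b)) / H1
    = (Real.exp c0 / H0) * ((1 + H0 * a) * Real.exp (-(H0 * a))
        - (1 + H0 * b) * Real.exp (-(H0 * b)))
      + (Real.exp c1 / H1) * ((1 + H1 * b) * Real.exp (-(H1 * b))) := by
  have hx0 : Real.exp c0 ≠ 0 := Real.exp_ne_zero _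
  have hy : Real.exp (-(H0 * b)) = Real.exp c1 * Real.exp (-(H1 * b)) / Real.exp c0 := by
    field_simp [mul_comm] at hrel ⊢
    linarith [hrel]
  rw [hy]
  field_simp
  ring

lemma my_base (h0 d0 : ℝ) (hh0 : 0 < h0) :
    d0 + Real.exp (h0 * d0 - h0 * d0) / h0
      = (Real.exp (h0 * d0) / h0) * ((1 + h0 * d0) * Real.exp (-(h0 * d0))) := by
  have hkey : Real.exp (h0 * d0) * Real.exp (-(h0 * d0)) = 1 := by
    rw [← Real.exp_add, add_neg_cancel, Real.exp_zero]
  rw [sub_self, Real.exp_zero]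
  field_simp
  linear_combination (norm := ring_nf) (-(1 + h0 * d0)) * hkey

lemma my_Hsum_pos (h : ℕ → ℝ) (k : ℕ) (hh : ∀ i < k + 1, 0 < h i) : 0 < Hsum h k :=
  Finset.sum_pos (fun i hi => hh i (Finset.mem_range.mp hi))
    ⟨0, Finset.mem_range.mpr (Nat.succ_pos k)⟩

lemma my_dle (d : ℕ → ℝ) (m : ℕ) (hmono : ∀ i, i + 1 < m → d i ≤ d (i + 1)) :
    ∀ i j, i ≤ j → j < m → d i ≤ d j := by
  intro i j hij hj
  induction j with
  | zero => obtain rfl : i = 0 := Nat.le_zero.mp hij; exact le_rfl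
  | succ p ih =>
    rcases Nat.lt_succ_iff_lt_or_eq.mp (Nat.lt_succ_of_le hij) with hlt | rfl
    · exact (ih (Nat.lt_succ_iff.mp hlt) (by omega)).trans (hmono p hj)
    · exact le_rfl

lemma my_tau (h d : ℕ → ℝ) (hd0 : 0 ≤ d 0) :
    ∀ k : ℕ, (∀ i < k + 1, 0 < h i) → (∀ i, i + 1 < k + 1 → d i ≤ d (i + 1)) →
    ∫ t in Set.Ioi (0:ℝ), ∏ i ∈ Finset.range (k + 1), Real.exp (-(h i * max (t - d i) 0)) =
      (∑ i ∈ Finset.range k,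
        (Real.exp (∑ j ∈ Finset.range (i + 1), h j * d j) / Hsum h i) *
          ((1 + Hsum h i * d i) * Real.exp (-(Hsum h i * d i)) -
            (1 + Hsum h i * d (i + 1)) * Real.exp (-(Hsum h i * d (i + 1)))))
      + (Real.exp (∑ j ∈ Finset.range (k + 1), h j * d j) / Hsum h k) *
          ((1 + Hsum h k * d k) * Real.exp (-(Hsum h k * d k))) := by
  intro k
  induction k with
  | zero =>
    intro hh _
    have hh0 : 0 < h 0 := hh 0 (by omega)
    have hH0 : Hsum h 0 = h 0 := by simp [Hsum]
    have hEq2 : Set.EqOn (fun t => ∏ i ∈ Finset.range 1, Real.exp (-(h i * max (t - d i) 0)))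
        (fun t => Real.exp (h 0 * d 0 - h 0 * t)) (Set.Ioi (d 0)) := by
      intro t ht
      simp only
      rw [my_resolve h d 1 t (fun i hi => by interval_cases i; exact le_of_lt ht),
        Finset.sum_range_one, Finset.sum_range_one]
    have hEq1 : Set.EqOn (fun t => ∏ i ∈ Finset.range 1, Real.exp (-(h i * max (t - d i) 0)))
        (fun _ => (1:ℝ)) (Set.Ioc 0 (d 0)) := by
      intro t ht
      simp only [Finset.prod_range_one]
      rw [max_eq_right (sub_nonpos.mpr ht.2), mul_zero, neg_zero, Real.exp_zero]
    have hint2 : IntegrableOn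
        (fun t => ∏ i ∈ Finset.range 1, Real.exp (-(h i * max (t - d i) 0)))
        (Set.Ioi (d 0)) :=
      (my_int_exp_integrable (d 0) (h 0 * d 0) hh0).congr_fun (fun t ht => (hEq2 ht).symm)
        measurableSet_Ioi
    have hint1 : IntegrableOn
        (fun t => ∏ i ∈ Finset.range 1, Real.exp (-(h i * max (t - d i) 0)))
        (Set.Ioc 0 (d 0)) := (my_prod_cont h d 1).integrableOn_Ioc
    rw [my_split _ (d 0) hd0 hint1 hint2,
      setIntegral_congr_fun measurableSet_Ioc hEq1,
      setIntegral_congr_fun measurableSet_Ioi hEq2, my_int_exp _ _ hh0]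
    have e1 : ∫ _ in Set.Ioc (0:ℝ) (d 0), (1:ℝ) = d 0 := by
      simp [Real.volume_Ioc, ENNReal.toReal_ofReal hd0, hd0]
    rw [e1, Finset.sum_range_zero, zero_add, hH0, Finset.sum_range_one]
    exact my_base (h 0) (d 0) hh0
  | succ k ih =>
    intro hh hmono
    have IH := ih (fun i hi => hh i (by omega)) (fun i hi => hmono i (by omega))
    have hdk1 : 0 ≤ d (k + 1) :=
      hd0.trans (my_dle d (k + 2) hmono 0 (k + 1) (by omega) (by omega))
    have hdle : ∀ i < k + 2, d i ≤ d (k + 1) := fun i hi =>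
      my_dle d (k + 2) hmono i (k + 1) (by omega) (by omega)
    have hH0pos : 0 < Hsum h k := my_Hsum_pos h k (fun i hi => hh i (by omega))
    have hH1pos : 0 < Hsum h (k + 1) := my_Hsum_pos h (k + 1) hh
    have hH0sum : Hsum h k = ∑ j ∈ Finset.range (k + 1), h j := rfl
    have hH1sum : Hsum h (k + 1) = ∑ j ∈ Finset.range (k + 2), h j := rfl
    set F2 := fun t : ℝ => ∏ i ∈ Finset.range (k + 2), Real.exp (-(h i * max (t - d i) 0))
      with hF2def
    set F1 := fun t : ℝ => ∏ i ∈ Finset.range (k + 1), Real.exp (-(h i * max (t - d i) 0))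
      with hF1def
    have hF2int : IntegrableOn F2 (Set.Ioi 0) :=
      my_prod_integrable h d (k + 2) (by omega) (hh 0 (by omega))
        (fun i hi => (hh i hi).le)
    have hF1int : IntegrableOn F1 (Set.Ioi 0) :=
      my_prod_integrable h d (k + 1) (by omega) (hh 0 (by omega))
        (fun i hi => (hh i (by omega)).le)
    have hcongrIoc : ∫ t in Set.Ioc (0:ℝ) (d (k + 1)), F2 t
        = ∫ t in Set.Ioc (0:ℝ) (d (k + 1)), F1 t := by
      refine setIntegral_congr_fun measurableSet_Ioc fun t ht => ?_
      show (∏ i ∈ Finset.range (k + 2), Real.exp (-(h i * max (t - d i) 0)))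
        = ∏ i ∈ Finset.range (k + 1), Real.exp (-(h i * max (t - d i) 0))
      rw [Finset.prod_range_succ, max_eq_right (sub_nonpos.mpr ht.2), mul_zero, neg_zero,
        Real.exp_zero, mul_one]
    have hEqB : Set.EqOn F2 (fun t => Real.exp ((∑ j ∈ Finset.range (k + 2), h j * d j)
        - Hsum h (k + 1) * t)) (Set.Ioi (d (k + 1))) := by
      intro t ht
      show (∏ i ∈ Finset.range (k + 2), Real.exp (-(h i * max (t - d i) 0))) = _
      rw [my_resolve h d (k + 2) t (fun i hi => (hdle i hi).trans (le_of_lt ht)), hH1sum]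
    have hEqA : Set.EqOn F1 (fun t => Real.exp ((∑ j ∈ Finset.range (k + 1), h j * d j)
        - Hsum h k * t)) (Set.Ioi (d (k + 1))) := by
      intro t ht
      show (∏ i ∈ Finset.range (k + 1), Real.exp (-(h i * max (t - d i) 0))) = _
      rw [my_resolve h d (k + 1) t
        (fun i hi => (hdle i (by omega)).trans (le_of_lt ht)), hH0sum]
    have hres2 : ∫ t in Set.Ioi (d (k + 1)), F2 t
        = Real.exp ((∑ j ∈ Finset.range (k + 2), h j * d j)
            - Hsum h (k + 1) * d (k + 1)) / Hsum h (k + 1) := by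
      rw [setIntegral_congr_fun measurableSet_Ioi hEqB]
      exact my_int_exp _ _ hH1pos
    have hres1 : ∫ t in Set.Ioi (d (k + 1)), F1 t
        = Real.exp ((∑ j ∈ Finset.range (k + 1), h j * d j)
            - Hsum h k * d (k + 1)) / Hsum h k := by
      rw [setIntegral_congr_fun measurableSet_Ioi hEqA]
      exact my_int_exp _ _ hH0pos
    have hmain : ∫ t in Set.Ioi (0:ℝ), F2 t
        = (∫ t in Set.Ioi (0:ℝ), F1 t)
          - Real.exp ((∑ j ∈ Finset.range (k + 1), h j * d j)
              - Hsum h k * d (k + 1)) / Hsum h k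
          + Real.exp ((∑ j ∈ Finset.range (k + 2), h j * d j)
              - Hsum h (k + 1) * d (k + 1)) / Hsum h (k + 1) := by
      rw [my_split F2 (d (k + 1)) hdk1 (hF2int.mono_set Set.Ioc_subset_Ioi_self)
          (hF2int.mono_set (Set.Ioi_subset_Ioi hdk1)),
        my_split F1 (d (k + 1)) hdk1 (hF1int.mono_set Set.Ioc_subset_Ioi_self)
          (hF1int.mono_set (Set.Ioi_subset_Ioi hdk1)),
        hcongrIoc, hres1, hres2]
      ring
    have he1 : Real.exp ((∑ j ∈ Finset.range (k + 1), h j * d j) - Hsum h k * d (k + 1))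
        = Real.exp (∑ j ∈ Finset.range (k + 1), h j * d j)
          * Real.exp (-(Hsum h k * d (k + 1))) := by
      rw [← Real.exp_add, sub_eq_add_neg]
    have he2 : Real.exp ((∑ j ∈ Finset.range (k + 2), h j * d j)
          - Hsum h (k + 1) * d (k + 1))
        = Real.exp (∑ j ∈ Finset.range (k + 2), h j * d j)
          * Real.exp (-(Hsum h (k + 1) * d (k + 1))) := by
      rw [← Real.exp_add, sub_eq_add_neg]
    have hrel : Real.exp (∑ j ∈ Finset.range (k + 1), h j * d j)
          * Real.exp (-(Hsum h k * d (k + 1)))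
        = Real.exp (∑ j ∈ Finset.range (k + 2), h j * d j)
          * Real.exp (-(Hsum h (k + 1) * d (k + 1))) := by
      rw [← Real.exp_add, ← Real.exp_add]
      congr 1
      have hA : (∑ j ∈ Finset.range (k + 2), h j * d j)
          = (∑ j ∈ Finset.range (k + 1), h j * d j) + h (k + 1) * d (k + 1) :=
        Finset.sum_range_succ _ _
      have hB : (∑ j ∈ Finset.range (k + 2), h j)
          = (∑ j ∈ Finset.range (k + 1), h j) + h (k + 1) :=
        Finset.sum_range_succ _ _
      rw [hA, hH1sum, hB, hH0sum]
      ring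
    have halg := my_alg (Hsum h k) (Hsum h (k + 1)) (d k) (d (k + 1))
      (∑ j ∈ Finset.range (k + 1), h j * d j) (∑ j ∈ Finset.range (k + 2), h j * d j)
      hH0pos.ne' hH1pos.ne' hrel
    have hk2 : k + 1 + 1 = k + 2 := rfl
    rw [hk2, hmain, IH,
      Finset.sum_range_succ (fun i =>
        (Real.exp (∑ j ∈ Finset.range (i + 1), h j * d j) / Hsum h i) *
          ((1 + Hsum h i * d i) * Real.exp (-(Hsum h i * d i)) -
            (1 + Hsum h i * d (i + 1)) * Real.exp (-(Hsum h i * d (i + 1))))) k,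
      he1, he2]
    linear_combination halg

/-- **Expected inter-block time in the coordinated setting (Theorem 1).**
If `X 0, …, X (n-1)` are independent exponential random variables with rates
`h 0, …, h (n-1) > 0` and `0 ≤ d 0 ≤ d 1 ≤ ⋯ ≤ d (n-1)` are shifts, then
`E[min_i (X i + d i)]` equals the closed-form expression `τ̄` of the paper. -/
theorem expectation_min_shifted_exponentials
    {Ω : Type*} [MeasurableSpace Ω] (μ : Measure Ω) [IsProbabilityMeasure μ]
    (n : ℕ) (hn : 0 < n) (h d : ℕ → ℝ)
    (hh : ∀ i < n, 0 < h i)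
    (hd0 : 0 ≤ d 0) (hdmono : ∀ i, i + 1 < n → d i ≤ d (i + 1))
    (X : ℕ → Ω → ℝ) (hXm : ∀ i, Measurable (X i))
    (hindep : iIndepFun (fun i : Fin n => X i) μ)
    (hlaw : ∀ i < n, μ.map (X i) = expMeasure (h i)) :
    ∫ ω, (⨅ i : Fin n, (X i ω + d i)) ∂μ =
      (∑ i ∈ Finset.range (n - 1),
        (Real.exp (∑ j ∈ Finset.range (i + 1), h j * d j) / Hsum h i) *
          ((1 + Hsum h i * d i) * Real.exp (-(Hsum h i * d i)) -
            (1 + Hsum h i * d (i + 1)) * Real.exp (-(Hsum h i * d (i + 1)))))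
      + (Real.exp (∑ j ∈ Finset.range n, h j * d j) / Hsum h (n - 1)) *
          ((1 + Hsum h (n - 1) * d (n - 1)) * Real.exp (-(Hsum h (n - 1) * d (n - 1)))) := by
  haveI : Nonempty (Fin n) := Fin.pos_iff_nonempty.mp hn
  set G := fun t : ℝ => ∏ i ∈ Finset.range n, Real.exp (-(h i * max (t - d i) 0)) with hGdef
  set M := fun ω => ⨅ i : Fin n, (X i ω + d i) with hMdef
  have hMmeas : Measurable M := Measurable.iInf (fun i => (hXm i).add_const _)
  have hXnn : ∀ i : Fin n, ∀ᵐ ω ∂μ, 0 ≤ X i ω := by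
    intro i
    have hz : μ {ω | X i ω < 0} = 0 := by
      have hset : {ω | X (i:ℕ) ω < 0} = X (i:ℕ) ⁻¹' (Set.Iio 0) := rfl
      rw [hset, ← Measure.map_apply (hXm i) measurableSet_Iio, hlaw i i.2, my_expMeasure_Iio]
    rw [ae_iff]
    convert hz using 2
    ext ω
    simp [not_le]
  have hdnn : ∀ i : Fin n, 0 ≤ d i := fun i =>
    hd0.trans (my_dle d n hdmono 0 i (Nat.zero_le _) i.2)
  have hMnn : ∀ᵐ ω ∂μ, 0 ≤ M ω := by
    filter_upwards [(ae_all_iff).mpr hXnn] with ω hω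
    exact le_ciInf (fun i => add_nonneg (hω i) (hdnn i))
  have hsurv : ∀ t : ℝ, μ {ω | t < M ω} = ENNReal.ofReal (G t) := by
    intro t
    have hset : {ω | t < M ω} = ⋂ i : Fin n, X (i:ℕ) ⁻¹' (Set.Ioi (t - d i)) := by
      ext ω
      simp only [Set.mem_setOf_eq, Set.mem_iInter, Set.mem_preimage, Set.mem_Ioi, hMdef]
      constructor
      · intro hω i
        have h1 : (⨅ i : Fin n, (X i ω + d i)) ≤ X i ω + d i :=
          ciInf_le (Set.Finite.bddBelow (Set.finite_range _)) i
        have := hω.trans_le h1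
        linarith
      · intro hω
        obtain ⟨j, hj⟩ := Finite.exists_min (fun i : Fin n => X i ω + d i)
        have h1 : t < X j ω + d j := by have := hω j; linarith
        exact h1.trans_le (le_ciInf hj)
    rw [hset, hindep.meas_iInter (fun i => ⟨Set.Ioi (t - d i), measurableSet_Ioi, rfl⟩)]
    have hone : ∀ i : Fin n, μ (X (i:ℕ) ⁻¹' Set.Ioi (t - d i))
        = ENNReal.ofReal (Real.exp (-(h i * max (t - d i) 0))) := by
      intro i
      rw [← Measure.map_apply (hXm i) measurableSet_Ioi, hlaw i i.2,
        my_expMeasure_Ioi (hh i i.2)]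
    simp_rw [hone]
    rw [← ENNReal.ofReal_prod_of_nonneg (fun i _ => (Real.exp_pos _).le), hGdef]
    congr 1
    exact Fin.prod_univ_eq_prod_range (fun i => Real.exp (-(h i * max (t - d i) 0))) n
  have hGint : IntegrableOn G (Set.Ioi 0) :=
    my_prod_integrable h d n hn (hh 0 hn) (fun i hi => (hh i hi).le)
  have hGnn : ∀ t : ℝ, 0 ≤ G t := fun t => Finset.prod_nonneg fun i _ => (Real.exp_pos _).le
  have hn1 : n - 1 + 1 = n := Nat.succ_pred_eq_of_pos hn
  have hG := my_tau h d hd0 (n - 1) (fun i hi => hh i (by omega)) (fun i hi => hdmono i (by omega))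
  rw [hn1] at hG
  have hInn : 0 ≤ ∫ t in Set.Ioi (0:ℝ), G t :=
    setIntegral_nonneg measurableSet_Ioi fun t _ => hGnn t
  calc ∫ ω, M ω ∂μ
      = ENNReal.toReal (∫⁻ ω, ENNReal.ofReal (M ω) ∂μ) :=
        integral_eq_lintegral_of_nonneg_ae hMnn hMmeas.aestronglyMeasurable
    _ = ENNReal.toReal (∫⁻ t in Set.Ioi (0:ℝ), μ {ω | t < M ω}) := by
        rw [lintegral_eq_lintegral_meas_lt μ hMnn hMmeas.aemeasurable]
    _ = ENNReal.toReal (∫⁻ t in Set.Ioi (0:ℝ), ENNReal.ofReal (G t)) := by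
        congr 1
        exact lintegral_congr fun t => hsurv t
    _ = ENNReal.toReal (ENNReal.ofReal (∫ t in Set.Ioi (0:ℝ), G t)) := by
        rw [← ofReal_integral_eq_lintegral_ofReal hGint
          (Filter.Eventually.of_forall fun t => hGnn t)]
    _ = ∫ t in Set.Ioi (0:ℝ), G t := ENNReal.toReal_ofReal hInn
    _ = _ := hG
end

section
/- Let X_1,…,X_n be independent random variables with X_i exponentially distributed with rate h_i > 0, and let 0 ≤ d_1 ≤ d_2 ≤ ⋯ ≤ d_n be real shifts, with H_k = h_1 + ⋯ + h_k. For each fixed i, the expectation E[ (X_i + d_i) · 1{ X_i + d_i ≤ X_j + d_j for all j } ] equals h_i · { Σ_{k=i}^{n-1} (e^{Σ_{j=1}^{k} h_j d_j} / H_k²) · [ (1 + H_k d_k) e^{-H_k d_k} − (1 + H_k d_{k+1}) e^{-H_k d_{k+1}} ] + (e^{Σ_{j=1}^{n} h_j d_j} / H_n²) · (1 + H_n d_n) e^{-H_n d_n} }. (This is the quantity τ̄_i computed in the proof of Theorem 1, the contribution of miner i to the expected inter-block time.) -/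
open MeasureTheory ProbabilityTheory Real

open Set
open scoped ENNReal

namespace BlockAux

lemma hasDerivAt_F {H : ℝ} (hH : H ≠ 0) (t : ℝ) :
    HasDerivAt (fun t : ℝ => -((1 + H * t) * exp (-(H * t))) / H ^ 2)
      (t * exp (-(H * t))) t := by
  have h1 : HasDerivAt (fun t : ℝ => 1 + H * t) H t := by
    simpa using ((hasDerivAt_id t).const_mul H).const_add 1
  have h2 : HasDerivAt (fun t : ℝ => exp (-(H * t))) (-H * exp (-(H * t))) t := by
    have h0 : HasDerivAt (fun t : ℝ => -(H * t)) (-H) t := by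
      simpa using ((hasDerivAt_id t).const_mul H).fun_neg
    simpa [mul_comm] using h0.exp
  have h4 := (h1.fun_mul h2).fun_neg.div_const (H ^ 2)
  refine h4.congr_deriv ?_
  field_simp
  ring

lemma tendsto_F_atTop {H : ℝ} (hH : 0 < H) :
    Filter.Tendsto (fun t : ℝ => (1 + H * t) * exp (-(H * t))) Filter.atTop (nhds 0) := by
  have hlin : Filter.Tendsto (fun t : ℝ => H * t) Filter.atTop Filter.atTop :=
    Filter.Tendsto.const_mul_atTop hH Filter.tendsto_id
  have hbase : Filter.Tendsto (fun u : ℝ => (1 + u) * exp (-u)) Filter.atTop (nhds 0) := by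
    have h1 : Filter.Tendsto (fun u : ℝ => exp (-u)) Filter.atTop (nhds 0) :=
      Real.tendsto_exp_neg_atTop_nhds_zero
    have h2 : Filter.Tendsto (fun u : ℝ => u ^ 1 * exp (-u)) Filter.atTop (nhds 0) :=
      Real.tendsto_pow_mul_exp_neg_atTop_nhds_zero 1
    have := h1.add h2
    rw [add_zero] at this
    refine this.congr fun u => by ring
  exact hbase.comp hlin

lemma integrableOn_Ioi_mul_exp {H a : ℝ} (hH : 0 < H) (ha : 0 ≤ a) :
    IntegrableOn (fun t : ℝ => t * exp (-(H * t))) (Ioi a) := by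
  have hF : Filter.Tendsto (fun t : ℝ => -((1 + H * t) * exp (-(H * t))) / H ^ 2)
      Filter.atTop (nhds 0) := by
    have := ((tendsto_F_atTop hH).neg).div_const (H ^ 2)
    simpa using this
  exact integrableOn_Ioi_deriv_of_nonneg
    ((hasDerivAt_F hH.ne' a).continuousAt.continuousWithinAt)
    (fun x _ => hasDerivAt_F hH.ne' x)
    (fun x hx => mul_nonneg (le_of_lt (lt_of_le_of_lt ha hx)) (exp_pos _).le)
    hF

lemma integral_Ioi_mul_exp {H a : ℝ} (hH : 0 < H) (ha : 0 ≤ a) :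
    ∫ t in Ioi a, t * exp (-(H * t)) = (1 + H * a) * exp (-(H * a)) / H ^ 2 := by
  have := integral_Ioi_of_hasDerivAt_of_tendsto'
    (f := fun t : ℝ => -((1 + H * t) * exp (-(H * t))) / H ^ 2)
    (fun x _ => hasDerivAt_F hH.ne' x)
    (integrableOn_Ioi_mul_exp hH ha)
    (by simpa using ((tendsto_F_atTop hH).neg).div_const (H ^ 2))
  rw [this]; ring

lemma integral_Ioc_mul_exp {H a b : ℝ} (hH : H ≠ 0) (hab : a ≤ b) :
    ∫ t in Ioc a b, t * exp (-(H * t)) =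
      ((1 + H * a) * exp (-(H * a)) - (1 + H * b) * exp (-(H * b))) / H ^ 2 := by
  have key := intervalIntegral.integral_eq_sub_of_hasDerivAt
    (f := fun t : ℝ => -((1 + H * t) * exp (-(H * t))) / H ^ 2)
    (f' := fun t : ℝ => t * exp (-(H * t)))
    (fun x _ => hasDerivAt_F hH x)
    (Continuous.intervalIntegrable (by continuity) a b)
  rw [intervalIntegral.integral_of_le hab] at key
  rw [key]; ring


lemma Hsum_pos {n : ℕ} {h : ℕ → ℝ} (hh : ∀ j < n, 0 < h j) {k : ℕ} (hk : k < n) :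
    0 < Hsum h k := by
  refine Finset.sum_pos (fun j hj => hh j ?_) ⟨0, by simp⟩
  exact lt_of_lt_of_le (Finset.mem_range.mp hj) (by omega)

lemma prodEq {n : ℕ} {h d : ℕ → ℝ} {k : ℕ} (hk : k < n) {t : ℝ}
    (h1 : ∀ j ≤ k, d j ≤ t) (h2 : ∀ j, k < j → j < n → t ≤ d j) :
    ∏ j ∈ Finset.range n, exp (-(h j * max (t - d j) 0)) =
      exp (∑ j ∈ Finset.range (k + 1), h j * d j) * exp (-(Hsum h k * t)) := by
  rw [Finset.range_eq_Ico, ← Finset.prod_Ico_consecutive _ (Nat.zero_le (k+1)) (by omega : k + 1 ≤ n)]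
  have hA : ∏ j ∈ Finset.Ico 0 (k+1), exp (-(h j * max (t - d j) 0)) =
      exp (∑ j ∈ Finset.range (k + 1), h j * d j) * exp (-(Hsum h k * t)) := by
    rw [Finset.range_eq_Ico] at *
    rw [← Real.exp_sum, ← Real.exp_add]
    congr 1
    have : ∀ j ∈ Finset.Ico 0 (k+1), -(h j * max (t - d j) 0) = h j * d j - h j * t := by
      intro j hj
      have hj' : j ≤ k := by simpa using Nat.lt_succ_iff.mp (Finset.mem_Ico.mp hj).2
      rw [max_eq_left (by linarith [h1 j hj'])]
      ring
    rw [Finset.sum_congr rfl this, Finset.sum_sub_distrib, ← Finset.sum_mul]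
    unfold Hsum
    rw [Finset.range_eq_Ico]
    ring
  have hB : ∏ j ∈ Finset.Ico (k+1) n, exp (-(h j * max (t - d j) 0)) = 1 := by
    refine Finset.prod_eq_one fun j hj => ?_
    obtain ⟨hj1, hj2⟩ := Finset.mem_Ico.mp hj
    rw [max_eq_right (by linarith [h2 j hj1 hj2]), mul_zero, neg_zero, exp_zero]
  rw [hA, hB, mul_one, Finset.range_eq_Ico]

lemma continuous_P (n : ℕ) (h d : ℕ → ℝ) :
    Continuous (fun t : ℝ => ∏ j ∈ Finset.range n, exp (-(h j * max (t - d j) 0))) := by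
  refine continuous_finset_prod _ fun j _ => ?_
  exact Real.continuous_exp.comp
    ((continuous_const.mul ((continuous_id.sub continuous_const).max continuous_const)).neg)

lemma integrableOn_main {n : ℕ} {h d : ℕ → ℝ} (hn : 0 < n) (hh : ∀ j < n, 0 < h j)
    {a : ℝ} (ha : 0 ≤ a) :
    IntegrableOn (fun t : ℝ => t * ∏ j ∈ Finset.range n, exp (-(h j * max (t - d j) 0)))
      (Ioi a) := by
  have hint : IntegrableOn (fun t : ℝ => exp (h 0 * d 0) * (t * exp (-(h 0 * t)))) (Ioi a) :=
    (integrableOn_Ioi_mul_exp (hh 0 hn) ha).const_mul _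
  refine Integrable.mono hint ((continuous_id.mul (continuous_P n h d)).aestronglyMeasurable.restrict) ?_
  rw [ae_restrict_iff' measurableSet_Ioi]
  refine Filter.Eventually.of_forall fun t ht => ?_
  have ht0 : 0 < t := lt_of_le_of_lt ha ht
  have hPpos : 0 < ∏ j ∈ Finset.range n, exp (-(h j * max (t - d j) 0)) :=
    Finset.prod_pos fun j _ => exp_pos _
  have hPle : ∏ j ∈ Finset.range n, exp (-(h j * max (t - d j) 0)) ≤
      exp (h 0 * d 0) * exp (-(h 0 * t)) := by
    have h0n : (0 : ℕ) ∈ Finset.range n := by simpa using hn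
    rw [← Finset.prod_erase_mul _ _ h0n]
    have hle1 : ∏ j ∈ (Finset.range n).erase 0, exp (-(h j * max (t - d j) 0)) ≤ 1 := by
      refine Finset.prod_le_one (fun j _ => (exp_pos _).le) fun j hj => ?_
      have hjn : j < n := Finset.mem_range.mp (Finset.mem_of_mem_erase hj)
      rw [← Real.exp_zero]
      exact exp_le_exp.mpr (by nlinarith [(hh j hjn).le, le_max_right (t - d j) (0:ℝ)])
    have hle2 : exp (-(h 0 * max (t - d 0) 0)) ≤ exp (h 0 * d 0) * exp (-(h 0 * t)) := by
      rw [← Real.exp_add]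
      refine exp_le_exp.mpr ?_
      nlinarith [(hh 0 hn).le, le_max_left (t - d 0) (0:ℝ)]
    calc (∏ j ∈ (Finset.range n).erase 0, exp (-(h j * max (t - d j) 0))) *
          exp (-(h 0 * max (t - d 0) 0))
        ≤ 1 * (exp (h 0 * d 0) * exp (-(h 0 * t))) := by
          exact mul_le_mul hle1 hle2 (exp_pos _).le zero_le_one
      _ = exp (h 0 * d 0) * exp (-(h 0 * t)) := by ring
  rw [Real.norm_eq_abs, Real.norm_eq_abs, abs_of_nonneg (by positivity),
    abs_of_nonneg (by positivity)]
  calc t * ∏ j ∈ Finset.range n, exp (-(h j * max (t - d j) 0))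
      ≤ t * (exp (h 0 * d 0) * exp (-(h 0 * t))) := by
        exact mul_le_mul_of_nonneg_left hPle ht0.le
    _ = exp (h 0 * d 0) * (t * exp (-(h 0 * t))) := by ring

lemma oneD (n : ℕ) (h d : ℕ → ℝ) (hn : 0 < n) (hh : ∀ j < n, 0 < h j)
    (hd0 : ∀ j < n, 0 ≤ d j) (hmono : ∀ j k, j ≤ k → k < n → d j ≤ d k) :
    ∀ m i, i < n → n - 1 - i = m →
    ∫ t in Ioi (d i), t * ∏ j ∈ Finset.range n, exp (-(h j * max (t - d j) 0)) =
      (∑ k ∈ Finset.Ico i (n - 1),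
          (exp (∑ j ∈ Finset.range (k + 1), h j * d j) / (Hsum h k) ^ 2) *
            ((1 + Hsum h k * d k) * exp (-(Hsum h k * d k)) -
              (1 + Hsum h k * d (k + 1)) * exp (-(Hsum h k * d (k + 1)))))
        + (exp (∑ j ∈ Finset.range n, h j * d j) / (Hsum h (n - 1)) ^ 2) *
            ((1 + Hsum h (n - 1) * d (n - 1)) * exp (-(Hsum h (n - 1) * d (n - 1)))) := by
  intro m
  induction m with
  | zero =>
    intro i hi hm
    have hi' : i = n - 1 := by omega
    subst hi'
    have hH : 0 < Hsum h (n - 1) := Hsum_pos hh (by omega)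
    have hcong : ∫ t in Ioi (d (n - 1)),
        t * ∏ j ∈ Finset.range n, exp (-(h j * max (t - d j) 0)) =
        ∫ t in Ioi (d (n - 1)),
          exp (∑ j ∈ Finset.range ((n-1) + 1), h j * d j) * (t * exp (-(Hsum h (n-1) * t))) := by
      refine setIntegral_congr_fun measurableSet_Ioi fun t ht => ?_
      rw [prodEq (n := n) (by omega) (fun j hj => (lt_of_le_of_lt (hmono j (n-1) hj (by omega)) ht).le)
        (fun j hj1 hj2 => by omega)]
      ring
    rw [hcong, integral_const_mul, integral_Ioi_mul_exp hH (hd0 _ (by omega))]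
    have hrange : (n - 1) + 1 = n := by omega
    rw [hrange]
    simp only [Finset.Ico_self, Finset.sum_empty, zero_add]
    ring
  | succ m ih =>
    intro i hi hm
    have hi1 : i + 1 < n := by omega
    have hdle : d i ≤ d (i + 1) := hmono i (i+1) (Nat.le_succ i) hi1
    have hH : 0 < Hsum h i := Hsum_pos hh hi
    have hsplit : Ioi (d i) = Ioc (d i) (d (i+1)) ∪ Ioi (d (i+1)) :=
      (Set.Ioc_union_Ioi_eq_Ioi hdle).symm
    rw [hsplit, setIntegral_union (Set.Ioc_disjoint_Ioi le_rfl) measurableSet_Ioi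
      ((integrableOn_main hn hh (hd0 i hi)).mono_set Set.Ioc_subset_Ioi_self)
      (integrableOn_main hn hh (hd0 (i+1) hi1))]
    have hmid : ∫ t in Ioc (d i) (d (i+1)),
        t * ∏ j ∈ Finset.range n, exp (-(h j * max (t - d j) 0)) =
        exp (∑ j ∈ Finset.range (i + 1), h j * d j) *
          (((1 + Hsum h i * d i) * exp (-(Hsum h i * d i)) -
            (1 + Hsum h i * d (i+1)) * exp (-(Hsum h i * d (i+1)))) / (Hsum h i) ^ 2) := by
      have hcong : ∫ t in Ioc (d i) (d (i+1)),
          t * ∏ j ∈ Finset.range n, exp (-(h j * max (t - d j) 0)) =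
          ∫ t in Ioc (d i) (d (i+1)),
            exp (∑ j ∈ Finset.range (i + 1), h j * d j) * (t * exp (-(Hsum h i * t))) := by
        refine setIntegral_congr_fun measurableSet_Ioc fun t ht => ?_
        rw [prodEq (n := n) hi (fun j hj => (lt_of_le_of_lt (hmono j i hj hi) ht.1).le)
          (fun j hj1 hj2 => le_trans ht.2 (hmono (i+1) j hj1 hj2))]
        ring
      rw [hcong, integral_const_mul, integral_Ioc_mul_exp hH.ne' hdle]
    rw [hmid, ih (i+1) hi1 (by omega),
      Finset.sum_eq_sum_Ico_succ_bot (by omega : i < n - 1)]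
    ring


lemma expMeasure_apply {r : ℝ} {s : Set ℝ} (hs : MeasurableSet s) :
    expMeasure r s = ∫⁻ x in s, exponentialPDF r x :=
  withDensity_apply _ hs

lemma measurable_exponentialPDF (r : ℝ) : Measurable (exponentialPDF r) :=
  (measurable_gammaPDFReal 1 r).ennreal_ofReal

lemma expMeasure_Ici {r x : ℝ} (hr : 0 < r) :
    expMeasure r (Ici x) = ENNReal.ofReal (exp (-(r * max x 0))) := by
  haveI := isProbabilityMeasure_expMeasure hr
  have hcompl : expMeasure r (Ici x) + expMeasure r (Iio x) = 1 := by
    have := measure_add_measure_compl (μ := expMeasure r) (measurableSet_Ici (a := x))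
    rwa [compl_Ici, measure_univ] at this
  rcases le_or_gt x 0 with hx | hx
  · have h0 : expMeasure r (Iio x) = 0 := by
      rw [expMeasure_apply measurableSet_Iio]
      exact lintegral_exponentialPDF_of_nonpos hx
    rw [h0, add_zero] at hcompl
    rw [hcompl, max_eq_right hx, mul_zero, neg_zero, exp_zero, ENNReal.ofReal_one]
  · have hIic : expMeasure r (Iic x) = ENNReal.ofReal (1 - exp (-(r * x))) := by
      rw [expMeasure_apply measurableSet_Iic, lintegral_exponentialPDF_eq_antiDeriv hr,
        if_pos hx.le]
    have hsing : expMeasure r {x} = 0 := by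
      rw [expMeasure_apply (measurableSet_singleton x)]
      exact setLIntegral_measure_zero _ _ (volume_singleton)
    have hIio : expMeasure r (Iio x) = ENNReal.ofReal (1 - exp (-(r * x))) := by
      have hu : expMeasure r (Iic x) = expMeasure r (Iio x) + expMeasure r {x} := by
        rw [← measure_union (by simp) (measurableSet_singleton x), Iio_union_right]
      rw [hu, hsing, add_zero] at hIic
      exact hIic
    rw [hIio] at hcompl
    have key : ENNReal.ofReal (exp (-(r * x))) + ENNReal.ofReal (1 - exp (-(r * x))) = 1 := by
      rw [← ENNReal.ofReal_add (exp_pos _).le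
        (by nlinarith [exp_le_one_iff.mpr (by nlinarith : -(r*x) ≤ 0)])]
      norm_num
    have heq : ENNReal.ofReal (1 - exp (-(r * x))) + expMeasure r (Ici x) =
        ENNReal.ofReal (1 - exp (-(r * x))) + ENNReal.ofReal (exp (-(r * x))) := by
      rw [add_comm] at hcompl key
      exact hcompl.trans key.symm
    have := (ENNReal.cancel_of_ne ENNReal.ofReal_ne_top).inj.mp heq
    rw [this, max_eq_left hx.le]


end BlockAux

open BlockAux

/-- **Contribution `τ̄_i` of miner `i` to the expected inter-block time (proof of Theorem 1).**
If `X 0, …, X (n-1)` are independent exponential random variables with rates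
`h 0, …, h (n-1) > 0` and `0 ≤ d 0 ≤ d 1 ≤ ⋯ ≤ d (n-1)` are shifts, then for each `i`,
`E[(X i + d i) · 1{X i + d i ≤ X j + d j for all j}]` equals the closed-form expression
`τ̄_i` of the paper. -/
theorem expectation_winner_contribution_shifted_exponentials
    {Ω : Type*} [MeasurableSpace Ω] (μ : Measure Ω) [IsProbabilityMeasure μ]
    (n : ℕ) (hn : 0 < n) (h d : ℕ → ℝ)
    (hh : ∀ i < n, 0 < h i)
    (hd0 : 0 ≤ d 0) (hdmono : ∀ i, i + 1 < n → d i ≤ d (i + 1))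
    (X : ℕ → Ω → ℝ) (hXm : ∀ i, Measurable (X i))
    (hindep : iIndepFun (fun i : Fin n => X i) μ)
    (hlaw : ∀ i < n, μ.map (X i) = expMeasure (h i))
    (i : Fin n) :
    ∫ ω in {ω | ∀ j : Fin n, X i ω + d i ≤ X j ω + d j}, (X i ω + d i) ∂μ =
      h i *
        ((∑ k ∈ Finset.Ico (i : ℕ) (n - 1),
          (Real.exp (∑ j ∈ Finset.range (k + 1), h j * d j) / (Hsum h k) ^ 2) *
            ((1 + Hsum h k * d k) * Real.exp (-(Hsum h k * d k)) -
              (1 + Hsum h k * d (k + 1)) * Real.exp (-(Hsum h k * d (k + 1)))))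
        + (Real.exp (∑ j ∈ Finset.range n, h j * d j) / (Hsum h (n - 1)) ^ 2) *
            ((1 + Hsum h (n - 1) * d (n - 1)) *
              Real.exp (-(Hsum h (n - 1) * d (n - 1))))) := by
  classical
  -- monotonicity facts
  have dmono : ∀ a b : ℕ, a ≤ b → b < n → d a ≤ d b := by
    intro a b hab hbn
    induction b with
    | zero => simp [Nat.le_zero.mp hab]
    | succ b ih =>
      rcases Nat.eq_or_lt_of_le hab with rfl | hlt
      · exact le_rfl
      · exact le_trans (ih (by omega) (by omega)) (hdmono b hbn)
  have hd0' : ∀ j < n, 0 ≤ d j := fun j hj => le_trans hd0 (dmono 0 j (Nat.zero_le j) hj)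
  have hdi0 : 0 ≤ d (i : ℕ) := hd0' _ i.isLt
  -- probability instances
  haveI hprob : ∀ j : Fin n, IsProbabilityMeasure (expMeasure (h (j : ℕ))) :=
    fun j => isProbabilityMeasure_expMeasure (hh _ j.isLt)
  haveI : ∀ j : {j : Fin n // j ≠ i}, IsProbabilityMeasure (expMeasure (h ((j : Fin n) : ℕ))) :=
    fun j => hprob j.1
  haveI : ∀ j : {j : Fin n // j ≠ i}, SigmaFinite (expMeasure (h ((j : Fin n) : ℕ))) :=
    fun j => inferInstance
  set Y : Ω → ({j : Fin n // j ≠ i} → ℝ) := fun ω j => X ((j : Fin n) : ℕ) ω with hYdef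
  have hYm : Measurable Y := measurable_pi_lambda _ fun j => hXm _
  set Q : Measure ({j : Fin n // j ≠ i} → ℝ) :=
    Measure.pi (fun j => expMeasure (h ((j : Fin n) : ℕ))) with hQdef
  haveI : IsProbabilityMeasure Q := by rw [hQdef]; infer_instance
  -- joint law of the other coordinates
  have hQ : μ.map Y = Q := by
    refine (Measure.pi_eq fun s hs => ?_).symm
    set B : Fin n → Set ℝ := fun j => if hj : j ≠ i then s ⟨j, hj⟩ else Set.univ with hB
    have hBm : ∀ j, MeasurableSet (B j) := by
      intro j
      rw [hB]
      dsimp only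
      split
      · exact hs _
      · exact MeasurableSet.univ
    have hpre : Y ⁻¹' (Set.univ.pi s) = ⋂ j ∈ Finset.univ.erase i, X (j : ℕ) ⁻¹' (B j) := by
      ext ω
      simp only [Set.mem_preimage, Set.mem_pi, Set.mem_univ, forall_true_left, Set.mem_iInter,
        Finset.mem_erase, Finset.mem_univ, and_true]
      constructor
      · intro hy j hj
        simpa [hB, hj] using hy ⟨j, hj⟩
      · intro hy j
        simpa [hB, j.2] using hy j.1 j.2
    rw [Measure.map_apply hYm (MeasurableSet.univ_pi hs), hpre,
      hindep.meas_biInter (fun j _ => ⟨B j, hBm j, rfl⟩),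
      Finset.prod_subtype (Finset.univ.erase i) (p := fun j => j ≠ i) (fun j => by simp)
        (fun j => μ (X (j : ℕ) ⁻¹' B j))]
    refine Finset.prod_congr rfl fun j _ => ?_
    have hBj : B (j : Fin n) = s j := by simp [hB, j.2]
    rw [hBj, ← Measure.map_apply (hXm _) (hs j), hlaw _ (j : Fin n).isLt]
  -- independence of X i and Y
  have hIndep : IndepFun (X (i : ℕ)) Y μ := by
    have h0 := hindep.indepFun_finset {i} (Finset.univ.erase i)
      (by simp) (fun j => hXm _)
    have hφ : Measurable fun g : ({x // x ∈ ({i} : Finset (Fin n))} → ℝ) =>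
        g ⟨i, Finset.mem_singleton_self i⟩ := measurable_pi_apply _
    have hψ : Measurable fun g : ({x // x ∈ Finset.univ.erase i} → ℝ) =>
        (fun j : {j : Fin n // j ≠ i} =>
          g ⟨j.1, Finset.mem_erase.mpr ⟨j.2, Finset.mem_univ _⟩⟩) :=
      measurable_pi_lambda _ fun j => measurable_pi_apply _
    exact h0.comp hφ hψ
  have hpairm : Measurable fun ω => (X (i : ℕ) ω, Y ω) := (hXm _).prodMk hYm
  have hPair : μ.map (fun ω => (X (i : ℕ) ω, Y ω)) = (expMeasure (h (i : ℕ))).prod Q := by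
    rw [(indepFun_iff_map_prod_eq_prod_map_map (hXm _).aemeasurable hYm.aemeasurable).mp hIndep,
      hlaw _ i.isLt, hQ]
  -- the winning event in product form
  set S : Set (ℝ × ({j : Fin n // j ≠ i} → ℝ)) :=
    {p | ∀ j : {j : Fin n // j ≠ i}, p.1 + d (i : ℕ) ≤ p.2 j + d ((j : Fin n) : ℕ)} with hSdef
  have hS : MeasurableSet S := by
    have : S = ⋂ j : {j : Fin n // j ≠ i},
        {p : ℝ × ({j : Fin n // j ≠ i} → ℝ) | p.1 + d (i : ℕ) ≤ p.2 j + d ((j : Fin n) : ℕ)} := by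
      ext p; simp [hSdef, Set.mem_iInter]
    rw [this]
    exact MeasurableSet.iInter fun j => measurableSet_le
      (measurable_fst.add_const _) (((measurable_pi_apply j).comp measurable_snd).add_const _)
  have hA : {ω | ∀ j : Fin n, X (i : ℕ) ω + d (i : ℕ) ≤ X (j : ℕ) ω + d (j : ℕ)} =
      (fun ω => (X (i : ℕ) ω, Y ω)) ⁻¹' S := by
    ext ω
    simp only [Set.mem_setOf_eq, Set.mem_preimage, hSdef, hYdef]
    constructor
    · exact fun hw j => hw j.1
    · intro hw j
      by_cases hj : j = i
      · subst hj; exact le_rfl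
      · exact hw ⟨j, hj⟩
  have hmap := setIntegral_map (μ := μ) (g := fun ω => (X (i : ℕ) ω, Y ω))
    (f := fun p => p.1 + d (i : ℕ)) hS
    ((measurable_fst.add_const _).aestronglyMeasurable) hpairm.aemeasurable
  rw [hA, ← hmap, hPair]
  -- nonnegativity a.e.
  have hnonneg : ∀ᵐ p ∂((expMeasure (h (i : ℕ))).prod Q), 0 ≤ p.1 + d (i : ℕ) := by
    rw [ae_iff]
    have hset : {p : ℝ × ({j : Fin n // j ≠ i} → ℝ) | ¬ 0 ≤ p.1 + d (i : ℕ)} =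
        (Set.Iio (-(d (i : ℕ)))) ×ˢ Set.univ := by
      ext p
      simp only [Set.mem_setOf_eq, not_le, Set.mem_prod, Set.mem_Iio, Set.mem_univ, and_true]
      constructor <;> intro hp <;> linarith
    rw [hset, Measure.prod_prod, measure_univ, mul_one, expMeasure_apply measurableSet_Iio]
    exact lintegral_exponentialPDF_of_nonpos (by linarith)
  rw [integral_eq_lintegral_of_nonneg_ae (ae_restrict_of_ae hnonneg)
    ((measurable_fst.add_const _).aestronglyMeasurable)]
  -- compute the lintegral
  have hcontprod : Continuous fun a : ℝ =>
      ∏ j : {j : Fin n // j ≠ i}, Real.exp (-(h ((j : Fin n) : ℕ) *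
        max (a + d (i : ℕ) - d ((j : Fin n) : ℕ)) 0)) := by
    refine continuous_finset_prod _ fun j _ => ?_
    exact Real.continuous_exp.comp
      ((continuous_const.mul (((continuous_id.add continuous_const).sub
        continuous_const).max continuous_const)).neg)
  have hlin : (∫⁻ p in S, ENNReal.ofReal (p.1 + d (i : ℕ)) ∂((expMeasure (h (i : ℕ))).prod Q)) =
      ∫⁻ a in Set.Ici (0:ℝ), ENNReal.ofReal ((h (i : ℕ) * Real.exp (-(h (i : ℕ) * a))) *
        ((a + d (i : ℕ)) * ∏ j : {j : Fin n // j ≠ i}, Real.exp (-(h ((j : Fin n) : ℕ) *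
          max (a + d (i : ℕ) - d ((j : Fin n) : ℕ)) 0)))) ∂volume := by
    rw [← lintegral_indicator hS]
    have hm0 : Measurable fun p : ℝ × ({j : Fin n // j ≠ i} → ℝ) =>
        ENNReal.ofReal (p.1 + d (i : ℕ)) :=
      ENNReal.measurable_ofReal.comp (measurable_fst.add_const _)
    rw [lintegral_prod _ ((hm0.indicator hS).aemeasurable)]
    have hsec : ∀ a : ℝ,
        (∫⁻ y, S.indicator (fun p => ENNReal.ofReal (p.1 + d (i : ℕ))) (a, y) ∂Q) =
        ENNReal.ofReal (a + d (i : ℕ)) *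
          ENNReal.ofReal (∏ j : {j : Fin n // j ≠ i}, Real.exp (-(h ((j : Fin n) : ℕ) *
            max (a + d (i : ℕ) - d ((j : Fin n) : ℕ)) 0))) := by
      intro a
      have hset : (fun y => S.indicator (fun p => ENNReal.ofReal (p.1 + d (i : ℕ))) (a, y)) =
          (Set.univ.pi fun j : {j : Fin n // j ≠ i} =>
            Set.Ici (a + d (i : ℕ) - d ((j : Fin n) : ℕ))).indicator
            (fun _ => ENNReal.ofReal (a + d (i : ℕ))) := by
        funext y
        by_cases hy : (a, y) ∈ S
        · rw [Set.indicator_of_mem hy, Set.indicator_of_mem]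
          intro j _
          simp only [Set.mem_Ici]
          simp only [hSdef, Set.mem_setOf_eq] at hy
          linarith [hy j]
        · rw [Set.indicator_of_notMem hy, Set.indicator_of_notMem]
          intro hc
          refine hy ?_
          simp only [hSdef, Set.mem_setOf_eq]
          intro j
          have := hc j (Set.mem_univ j)
          simp only [Set.mem_Ici] at this
          linarith
      rw [hset, lintegral_indicator_const (MeasurableSet.univ_pi fun j => measurableSet_Ici),
        hQdef, Measure.pi_pi]
      congr 1
      rw [ENNReal.ofReal_prod_of_nonneg (fun j _ => (Real.exp_pos _).le)]
      exact Finset.prod_congr rfl fun j _ => expMeasure_Ici (hh _ (j : Fin n).isLt)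
    rw [lintegral_congr hsec]
    have hwd : expMeasure (h (i : ℕ)) = volume.withDensity (exponentialPDF (h (i : ℕ))) := rfl
    have hFm : Measurable fun a : ℝ => ENNReal.ofReal (a + d (i : ℕ)) *
        ENNReal.ofReal (∏ j : {j : Fin n // j ≠ i}, Real.exp (-(h ((j : Fin n) : ℕ) *
          max (a + d (i : ℕ) - d ((j : Fin n) : ℕ)) 0))) :=
      (ENNReal.measurable_ofReal.comp (measurable_id.add_const _)).mul
        (ENNReal.measurable_ofReal.comp hcontprod.measurable)
    rw [hwd, lintegral_withDensity_eq_lintegral_mul _ (measurable_exponentialPDF _) hFm]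
    rw [← lintegral_add_compl _ (measurableSet_Ici (a := (0:ℝ))), Set.compl_Ici]
    have hzero : (∫⁻ a in Set.Iio (0:ℝ), (exponentialPDF (h (i : ℕ)) *
        fun a => ENNReal.ofReal (a + d (i : ℕ)) *
          ENNReal.ofReal (∏ j : {j : Fin n // j ≠ i}, Real.exp (-(h ((j : Fin n) : ℕ) *
            max (a + d (i : ℕ) - d ((j : Fin n) : ℕ)) 0)))) a ∂volume) = 0 := by
      have hz : ∀ a : ℝ, a ∈ Set.Iio (0:ℝ) → (exponentialPDF (h (i : ℕ)) *
          fun a => ENNReal.ofReal (a + d (i : ℕ)) *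
            ENNReal.ofReal (∏ j : {j : Fin n // j ≠ i}, Real.exp (-(h ((j : Fin n) : ℕ) *
              max (a + d (i : ℕ) - d ((j : Fin n) : ℕ)) 0)))) a = (fun _ : ℝ => (0:ℝ≥0∞)) a := by
        intro a ha
        simp only [Pi.mul_apply]
        rw [exponentialPDF_of_neg ha, zero_mul]
      rw [setLIntegral_congr_fun measurableSet_Iio hz]
      simp
    have hcong : ∫⁻ a in Set.Ici (0:ℝ), (exponentialPDF (h (i : ℕ)) *
        fun a => ENNReal.ofReal (a + d (i : ℕ)) *
          ENNReal.ofReal (∏ j : {j : Fin n // j ≠ i}, Real.exp (-(h ((j : Fin n) : ℕ) *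
            max (a + d (i : ℕ) - d ((j : Fin n) : ℕ)) 0)))) a ∂volume =
        ∫⁻ a in Set.Ici (0:ℝ), ENNReal.ofReal ((h (i : ℕ) * Real.exp (-(h (i : ℕ) * a))) *
          ((a + d (i : ℕ)) * ∏ j : {j : Fin n // j ≠ i}, Real.exp (-(h ((j : Fin n) : ℕ) *
            max (a + d (i : ℕ) - d ((j : Fin n) : ℕ)) 0)))) ∂volume := by
      refine setLIntegral_congr_fun measurableSet_Ici
        (fun a (ha : 0 ≤ a) => ?_)
      simp only [Pi.mul_apply]
      rw [exponentialPDF_of_nonneg ha, ← ENNReal.ofReal_mul (by linarith : (0:ℝ) ≤ a + d (i : ℕ)),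
        ← ENNReal.ofReal_mul (mul_nonneg (hh _ i.isLt).le (Real.exp_pos _).le)]
    rw [hzero, add_zero, hcong]
  rw [hlin]
  -- back to a real integral
  have hGnn : 0 ≤ᵐ[volume.restrict (Set.Ici (0:ℝ))] fun a : ℝ =>
      (h (i : ℕ) * Real.exp (-(h (i : ℕ) * a))) *
        ((a + d (i : ℕ)) * ∏ j : {j : Fin n // j ≠ i}, Real.exp (-(h ((j : Fin n) : ℕ) *
          max (a + d (i : ℕ) - d ((j : Fin n) : ℕ)) 0))) := by
    have hae : ∀ᵐ a ∂(volume.restrict (Set.Ici (0:ℝ))), 0 ≤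
        (h (i : ℕ) * Real.exp (-(h (i : ℕ) * a))) *
        ((a + d (i : ℕ)) * ∏ j : {j : Fin n // j ≠ i}, Real.exp (-(h ((j : Fin n) : ℕ) *
          max (a + d (i : ℕ) - d ((j : Fin n) : ℕ)) 0))) := by
      rw [ae_restrict_iff' measurableSet_Ici]
      refine Filter.Eventually.of_forall fun a (ha : 0 ≤ a) => ?_
      have h1 : 0 ≤ a + d (i : ℕ) := by linarith
      have h2 : (0:ℝ) < ∏ j : {j : Fin n // j ≠ i}, Real.exp (-(h ((j : Fin n) : ℕ) *
            max (a + d (i : ℕ) - d ((j : Fin n) : ℕ)) 0)) :=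
        Finset.prod_pos fun j _ => Real.exp_pos _
      have h3 : 0 < h (i : ℕ) := hh _ i.isLt
      positivity
    exact hae
  have hGm : AEStronglyMeasurable (fun a : ℝ =>
      (h (i : ℕ) * Real.exp (-(h (i : ℕ) * a))) *
        ((a + d (i : ℕ)) * ∏ j : {j : Fin n // j ≠ i}, Real.exp (-(h ((j : Fin n) : ℕ) *
          max (a + d (i : ℕ) - d ((j : Fin n) : ℕ)) 0))))
      (volume.restrict (Set.Ici (0:ℝ))) := by
    refine Continuous.aestronglyMeasurable ((continuous_const.mul (Real.continuous_exp.comp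
      ((continuous_const.mul continuous_id).neg))).mul
      (((continuous_id.add continuous_const)).mul hcontprod)) |>.restrict
  rw [← integral_eq_lintegral_of_nonneg_ae hGnn hGm]
  -- identify with the 1-D integral
  have hstep1 : ∀ a ∈ Set.Ici (0:ℝ),
      (h (i : ℕ) * Real.exp (-(h (i : ℕ) * a))) *
        ((a + d (i : ℕ)) * ∏ j : {j : Fin n // j ≠ i}, Real.exp (-(h ((j : Fin n) : ℕ) *
          max (a + d (i : ℕ) - d ((j : Fin n) : ℕ)) 0))) =
      h (i : ℕ) * ((a + d (i : ℕ)) *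
        ∏ j ∈ Finset.range n, Real.exp (-(h j * max ((a + d (i : ℕ)) - d j) 0))) := by
    intro a ha
    have hip : Real.exp (-(h (i : ℕ) * a)) =
        Real.exp (-(h ((i : Fin n) : ℕ) * max ((a + d (i : ℕ)) - d ((i : Fin n) : ℕ)) 0)) := by
      rw [add_sub_cancel_right, max_eq_left ha]
    have hfull : ∏ j ∈ Finset.range n, Real.exp (-(h j * max ((a + d (i : ℕ)) - d j) 0)) =
        Real.exp (-(h ((i : Fin n) : ℕ) * max ((a + d (i : ℕ)) - d ((i : Fin n) : ℕ)) 0)) *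
          ∏ j : {j : Fin n // j ≠ i}, Real.exp (-(h ((j : Fin n) : ℕ) *
            max ((a + d (i : ℕ)) - d ((j : Fin n) : ℕ)) 0)) := by
      rw [← Fin.prod_univ_eq_prod_range
        (fun j => Real.exp (-(h j * max ((a + d (i : ℕ)) - d j) 0))) n,
        ← Finset.mul_prod_erase Finset.univ _ (Finset.mem_univ i)]
      congr 1
      exact Finset.prod_subtype (Finset.univ.erase i) (fun j => by simp) _
    rw [hfull, ← hip]
    ring
  rw [setIntegral_congr_fun measurableSet_Ici hstep1, MeasureTheory.integral_const_mul]
  have hsub : (∫ a in Set.Ici (0:ℝ), (a + d (i : ℕ)) *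
      ∏ j ∈ Finset.range n, Real.exp (-(h j * max ((a + d (i : ℕ)) - d j) 0))) =
      ∫ t in Set.Ioi (d (i : ℕ)), t *
        ∏ j ∈ Finset.range n, Real.exp (-(h j * max (t - d j) 0)) := by
    set φ : ℝ → ℝ := fun t => t * ∏ j ∈ Finset.range n, Real.exp (-(h j * max (t - d j) 0))
      with hφ
    have h3 : (fun a => (Set.Ici (d (i : ℕ))).indicator φ (a + d (i : ℕ))) =
        fun a => (Set.Ici (0:ℝ)).indicator (fun a => φ (a + d (i : ℕ))) a := by
      funext a
      by_cases ha : 0 ≤ a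
      · rw [Set.indicator_of_mem (by simp [Set.mem_Ici]; linarith),
          Set.indicator_of_mem (Set.mem_Ici.mpr ha)]
      · rw [Set.indicator_of_notMem (fun hc => ha (by linarith [Set.mem_Ici.mp hc])),
          Set.indicator_of_notMem (fun hc => ha (Set.mem_Ici.mp hc))]
    have e1 : (∫ t in Set.Ioi (d (i : ℕ)), φ t) = ∫ t in Set.Ici (d (i : ℕ)), φ t :=
      integral_Ici_eq_integral_Ioi.symm
    have e2 : (∫ t in Set.Ici (d (i : ℕ)), φ t) = ∫ t, (Set.Ici (d (i : ℕ))).indicator φ t :=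
      (integral_indicator measurableSet_Ici).symm
    have e3 : (∫ t, (Set.Ici (d (i : ℕ))).indicator φ t) =
        ∫ a, (Set.Ici (d (i : ℕ))).indicator φ (a + d (i : ℕ)) :=
      (integral_add_right_eq_self _ _).symm
    have e4 : (∫ a, (Set.Ici (d (i : ℕ))).indicator φ (a + d (i : ℕ))) =
        ∫ a, (Set.Ici (0:ℝ)).indicator (fun a => φ (a + d (i : ℕ))) a := by rw [h3]
    have e5 : (∫ a, (Set.Ici (0:ℝ)).indicator (fun a => φ (a + d (i : ℕ))) a) =
        ∫ a in Set.Ici (0:ℝ), φ (a + d (i : ℕ)) := integral_indicator measurableSet_Ici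
    rw [e1, e2, e3, e4, e5]
  rw [hsub, oneD n h d hn hh hd0' dmono (n - 1 - (i : ℕ)) (i : ℕ) i.isLt rfl]
end

section
/- Increasing the latency of any one miner to the coordinator strictly increases the expected inter-block time (hence strictly decreases the overall system efficiency). Precisely: let X_1,…,X_n be independent exponential random variables with rates h_1,…,h_n > 0, and let d_1,…,d_n ≥ 0 and d'_1,…,d'_n ≥ 0 be shifts with d'_j ≥ d_j for all j and d'_i > d_i for at least one i. Then E[ min_{1≤j≤n} (X_j + d'_j) ] > E[ min_{1≤j≤n} (X_j + d_j) ]. -/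
open MeasureTheory ProbabilityTheory Real Set

lemma my_expMeasure_eq (r : ℝ) :
    expMeasure r = volume.withDensity (exponentialPDF r) := rfl

lemma my_exponentialPDFReal_of_nonneg {r x : ℝ} (hx : 0 ≤ x) :
    exponentialPDFReal r x = r * rexp (-(r * x)) := by
  simp [exponentialPDFReal, gammaPDFReal, hx, Real.Gamma_one, Real.rpow_one]

lemma my_exponentialPDFReal_of_neg {r x : ℝ} (hx : x < 0) :
    exponentialPDFReal r x = 0 := by
  simp [exponentialPDFReal, gammaPDFReal, not_le.mpr hx]

lemma my_exp_integrable {r : ℝ} (hr : 0 < r) :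
    Integrable (id : ℝ → ℝ) (expMeasure r) := by
  have hm : Measurable (exponentialPDF r) :=
    (measurable_exponentialPDFReal r).ennreal_ofReal
  have hg : Integrable (fun x : ℝ => exponentialPDFReal r x * |x|) volume := by
    have h1 : IntegrableOn (fun x : ℝ => exponentialPDFReal r x * |x|) (Iic 0) volume := by
      refine (integrableOn_zero).congr_fun (fun x hx => ?_) measurableSet_Iic
      rcases lt_or_eq_of_le (mem_Iic.mp hx) with hx' | hx'
      · simp [my_exponentialPDFReal_of_neg hx']
      · simp [hx']
    have h2 : IntegrableOn (fun x : ℝ => exponentialPDFReal r x * |x|) (Ioi 0) volume := by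
      have h2' : IntegrableOn (fun x : ℝ => r * (x ^ (1:ℝ) * rexp (-r * x ^ (1:ℝ)))) (Ioi 0)
          volume := (integrableOn_rpow_mul_exp_neg_mul_rpow (s := 1) (p := 1)
        (by norm_num) zero_lt_one hr).const_mul r
      refine h2'.congr_fun (fun x hx => ?_) measurableSet_Ioi
      have hx0 : (0 : ℝ) < x := hx
      rw [my_exponentialPDFReal_of_nonneg hx0.le, abs_of_pos hx0]
      simp [Real.rpow_one]
      ring
    have : IntegrableOn (fun x : ℝ => exponentialPDFReal r x * |x|) (Iic 0 ∪ Ioi 0) volume :=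
      h1.union h2
    rwa [Iic_union_Ioi, integrableOn_univ] at this
  refine ⟨aestronglyMeasurable_id, ?_⟩
  have key : ∫⁻ x, (‖x‖₊ : ENNReal) ∂(expMeasure r)
      = ∫⁻ x, ENNReal.ofReal (exponentialPDFReal r x * |x|) ∂volume := by
    rw [my_expMeasure_eq, lintegral_withDensity_eq_lintegral_mul volume hm
      measurable_nnnorm.coe_nnreal_ennreal]
    congr 1
    funext x
    simp only [Pi.mul_apply, exponentialPDF]
    rw [ENNReal.ofReal_mul (exponentialPDFReal_nonneg hr x), ← enorm_eq_nnnorm, Real.enorm_eq_ofReal_abs]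
  have : HasFiniteIntegral (id : ℝ → ℝ) (expMeasure r) := by
    rw [HasFiniteIntegral]
    simp only [id_eq, enorm_eq_nnnorm]
    rw [key]
    exact (lintegral_ofReal_le_lintegral_enorm _).trans_lt hg.2
  exact this

lemma my_expMeasure_Ioo_pos {r : ℝ} (hr : 0 < r) {a b : ℝ} (ha : 0 ≤ a) (hab : a < b) :
    0 < expMeasure r (Ioo a b) := by
  rw [my_expMeasure_eq, withDensity_apply _ measurableSet_Ioo]
  have hlow : ∫⁻ _x in Ioo a b, ENNReal.ofReal (r * rexp (-(r * b))) ∂volume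
      ≤ ∫⁻ x in Ioo a b, exponentialPDF r x ∂volume := by
    refine setLIntegral_mono' measurableSet_Ioo (fun x hx => ?_)
    rw [exponentialPDF_of_nonneg (ha.trans hx.1.le)]
    exact ENNReal.ofReal_le_ofReal (mul_le_mul_of_nonneg_left
      (exp_le_exp.mpr (neg_le_neg (mul_le_mul_of_nonneg_left hx.2.le hr.le))) hr.le)
  refine lt_of_lt_of_le ?_ hlow
  rw [setLIntegral_const]
  refine ENNReal.mul_pos ?_ ?_
  · simp only [ne_eq, ENNReal.ofReal_eq_zero, not_le]
    positivity
  · rw [Real.volume_Ioo]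
    exact (ENNReal.ofReal_pos.mpr (sub_pos.mpr hab)).ne'

lemma my_expMeasure_Ioi_pos {r : ℝ} (hr : 0 < r) (a : ℝ) : 0 < expMeasure r (Ioi a) := by
  refine lt_of_lt_of_le (my_expMeasure_Ioo_pos hr (le_max_right a 0) (lt_add_one _))
    (measure_mono ?_)
  exact fun x hx => lt_of_le_of_lt (le_max_left a 0) hx.1

lemma my_expMeasure_Iio_zero {r : ℝ} : expMeasure r (Iio 0) = 0 := by
  rw [my_expMeasure_eq, withDensity_apply _ measurableSet_Iio]
  exact lintegral_exponentialPDF_of_nonpos le_rfl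

/-- **Strict monotonicity of the expected inter-block time in the latencies
(Corollary 4).** If `X 0, …, X (n-1)` are independent exponential random variables
with rates `h 0, …, h (n-1) > 0`, and `d, d'` are nonnegative shift vectors with
`d' j ≥ d j` for all `j` and `d' i > d i` for some `i`, then
`E[min_j (X j + d' j)] > E[min_j (X j + d j)]`. -/
theorem expectation_min_strict_mono_in_shifts
    {Ω : Type*} [MeasurableSpace Ω] (μ : Measure Ω) [IsProbabilityMeasure μ]
    (n : ℕ) (hn : 0 < n) (h : Fin n → ℝ) (hh : ∀ i, 0 < h i)
    (d d' : Fin n → ℝ) (hd : ∀ j, 0 ≤ d j) (hd' : ∀ j, 0 ≤ d' j)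
    (hle : ∀ j, d j ≤ d' j) (i : Fin n) (hlt : d i < d' i)
    (X : Fin n → Ω → ℝ) (hXm : ∀ j, Measurable (X j))
    (hindep : iIndepFun X μ)
    (hlaw : ∀ j, μ.map (X j) = expMeasure (h j)) :
    (∫ ω, (⨅ j : Fin n, (X j ω + d' j)) ∂μ) >
      ∫ ω, (⨅ j : Fin n, (X j ω + d j)) ∂μ := by
  have hne : Nonempty (Fin n) := Fin.pos_iff_nonempty.mp hn
  -- a.e. nonnegativity of each `X j`
  have hae : ∀ᵐ ω ∂μ, ∀ j, 0 ≤ X j ω := by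
    rw [ae_all_iff]
    intro j
    have h0 : μ (X j ⁻¹' Iio 0) = 0 := by
      have hmap := Measure.map_apply (μ := μ) (hXm j) (measurableSet_Iio (a := (0:ℝ)))
      rw [hlaw j, my_expMeasure_Iio_zero] at hmap
      exact hmap.symm
    rw [ae_iff]
    simp only [not_le]; exact h0
  -- each `X j` is integrable
  have hXint : ∀ j, Integrable (X j) μ := by
    intro j
    have := (integrable_map_measure aestronglyMeasurable_id (hXm j).aemeasurable).mp
      (by rw [hlaw j]; exact my_exp_integrable (hh j))
    simpa [Function.comp] using this
  have hbdd : ∀ (c : Fin n → ℝ) (ω : Ω), BddBelow (Set.range fun j => X j ω + c j) :=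
    fun c ω => (Set.finite_range _).bddBelow
  set f : Ω → ℝ := fun ω => ⨅ j, (X j ω + d j) with hfdef
  set f' : Ω → ℝ := fun ω => ⨅ j, (X j ω + d' j) with hf'def
  have hfle : ∀ ω, f ω ≤ f' ω := fun ω =>
    ciInf_mono (hbdd d ω) (fun j => by linarith [hle j])
  -- integrability of the infima
  have hint : ∀ (c : Fin n → ℝ), (∀ j, 0 ≤ c j) →
      Integrable (fun ω => ⨅ j, (X j ω + c j)) μ := by
    intro c hc
    refine Integrable.mono' ((hXint i).add (integrable_const (c i)))
      (Measurable.iInf (fun j => (hXm j).add_const _)).aestronglyMeasurable ?_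
    filter_upwards [hae] with ω hω
    rw [Real.norm_eq_abs, abs_of_nonneg (le_ciInf fun j => add_nonneg (hω j) (hc j))]
    exact ciInf_le (hbdd c ω) i
  have hfi : Integrable f μ := hint d hd
  have hf'i : Integrable f' μ := hint d' hd'
  -- the good event
  set S : Fin n → Set ℝ := fun j => if j = i then Iio 1 else Ioi (1 + d' i) with hSdef
  have hSm : ∀ j, MeasurableSet (S j) := by
    intro j
    by_cases hj : j = i <;> simp [hSdef, hj]
  have hB : μ (⋂ j, X j ⁻¹' S j) = ∏ j, μ (X j ⁻¹' S j) :=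
    hindep.meas_iInter (fun j => ⟨S j, hSm j, rfl⟩)
  have hBpos : 0 < μ (⋂ j, X j ⁻¹' S j) := by
    rw [hB]
    refine CanonicallyOrderedAdd.prod_pos.mpr fun j _ => ?_
    have hpre : μ (X j ⁻¹' S j) = expMeasure (h j) (S j) := by
      rw [← hlaw j, Measure.map_apply (hXm j) (hSm j)]
    rw [hpre]
    by_cases hj : j = i
    · simp only [hSdef, if_pos hj]
      refine lt_of_lt_of_le (my_expMeasure_Ioo_pos (hh j) le_rfl one_pos)
        (measure_mono fun x hx => hx.2)
    · simp only [hSdef, if_neg hj]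
      exact my_expMeasure_Ioi_pos (hh j) _
  -- on the good event, the gap is at least `d' i - d i`
  have hgap : ∀ ω ∈ ⋂ j, X j ⁻¹' S j, f ω + (d' i - d i) ≤ f' ω := by
    intro ω hω
    have hωi : X i ω < 1 := by
      have := Set.mem_iInter.mp hω i
      simpa [hSdef] using this
    have hωj : ∀ j, j ≠ i → 1 + d' i < X j ω := by
      intro j hj
      have := Set.mem_iInter.mp hω j
      simpa [hSdef, hj] using this
    have h1 : f ω ≤ X i ω + d i := ciInf_le (hbdd d ω) i
    have h2 : X i ω + d' i ≤ f' ω := by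
      refine le_ciInf fun j => ?_
      by_cases hj : j = i
      · subst hj; exact le_rfl
      · have hx := hωj j hj
        have hdj := hd' j
        linarith
    linarith
  -- conclude
  have hsub : Integrable (fun ω => f' ω - f ω) μ := hf'i.sub hfi
  have hpos : 0 < ∫ ω, (f' ω - f ω) ∂μ := by
    rw [integral_pos_iff_support_of_nonneg_ae
      (Filter.Eventually.of_forall fun ω => sub_nonneg.mpr (hfle ω)) hsub]
    refine lt_of_lt_of_le hBpos (measure_mono ?_)
    intro ω hω
    have hg := hgap ω hω
    simp only [Function.mem_support]
    intro hzero
    have : f ω < f' ω := by linarith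
    rw [sub_eq_zero] at hzero
    exact absurd hzero (ne_of_gt this)
  rw [integral_sub hf'i hfi] at hpos
  linarith
end

section
/- In the two-miner coordinated model, strict inequality of latencies produces unfairness irrespective of the compute capacities: let X_1 and X_2 be independent exponential random variables with rates h_1 > 0 and h_2 > 0, and let 0 ≤ d_1 < d_2 be shifts. Then P( X_1 + d_1 ≤ X_2 + d_2 ) > h_1/(h_1 + h_2) and P( X_2 + d_2 ≤ X_1 + d_1 ) < h_2/(h_1 + h_2); that is, the miner farther from the coordinator receives strictly less than its fair share h_2/(h_1+h_2) of blocks, and the closer miner strictly more than its fair share h_1/(h_1+h_2). -/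
open MeasureTheory ProbabilityTheory Real

open Set
open scoped ENNReal

lemma expMeasure_apply (r : ℝ) {s : Set ℝ} (hs : MeasurableSet s) :
    expMeasure r s = ∫⁻ x in s, exponentialPDF r x := by
  rw [expMeasure, gammaMeasure, withDensity_apply _ hs]
  rfl

lemma expMeasure_Iic {r : ℝ} (hr : 0 < r) (t : ℝ) :
    expMeasure r (Iic t) = ENNReal.ofReal (if 0 ≤ t then 1 - exp (-(r * t)) else 0) := by
  rw [expMeasure_apply r measurableSet_Iic, lintegral_exponentialPDF_eq_antiDeriv hr]

lemma expMeasure_Ici {r : ℝ} (hr : 0 < r) {t : ℝ} (ht : 0 ≤ t) :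
    expMeasure r (Ici t) = ENNReal.ofReal (exp (-(r * t))) := by
  have hprob : IsProbabilityMeasure (expMeasure r) := isProbabilityMeasure_expMeasure hr
  have hsing : expMeasure r {t} = 0 := by
    rw [expMeasure_apply r (measurableSet_singleton t)]
    simp [Measure.restrict_singleton]
  have hIio : expMeasure r (Iio t) = ENNReal.ofReal (1 - exp (-(r * t))) := by
    have : expMeasure r (Iic t) = expMeasure r (Iio t) + expMeasure r {t} := by
      rw [← measure_union (by simp) (measurableSet_singleton t), Iio_union_right]
    rw [hsing, add_zero] at this
    rw [← this, expMeasure_Iic hr, if_pos ht]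
  have : Ici t = (Iio t)ᶜ := by simp
  rw [this, measure_compl measurableSet_Iio (measure_ne_top _ _), measure_univ, hIio,
    ← ENNReal.ofReal_one, ← ENNReal.ofReal_sub _ (sub_nonneg.mpr (by rw [Real.exp_le_one_iff]; nlinarith))]
  norm_num

lemma measurable_exponentialPDF (r : ℝ) : Measurable (exponentialPDF r) :=
  (measurable_exponentialPDFReal r).ennreal_ofReal

lemma key_prod (h₁ h₂ d : ℝ) (hh₁ : 0 < h₁) (hh₂ : 0 < h₂) (hd : 0 ≤ d) :
    (expMeasure h₁).prod (expMeasure h₂) {p : ℝ × ℝ | p.2 + d ≤ p.1}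
      = ENNReal.ofReal (exp (-(h₁ * d)) * (h₂ / (h₁ + h₂))) := by
  have hS : MeasurableSet {p : ℝ × ℝ | p.2 + d ≤ p.1} :=
    measurableSet_le (measurable_snd.add_const d) measurable_fst
  haveI := isProbabilityMeasure_expMeasure hh₁
  haveI := isProbabilityMeasure_expMeasure hh₂
  rw [Measure.prod_apply_symm hS]
  have h1 : ∀ y : ℝ, ((fun x => (x, y)) ⁻¹' {p : ℝ × ℝ | p.2 + d ≤ p.1}) = Ici (y + d) := by
    intro y; ext x; simp [Set.mem_Ici]
  simp_rw [h1]
  rw [expMeasure, gammaMeasure, show gammaPDF 1 h₂ = exponentialPDF h₂ from rfl,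
    lintegral_withDensity_eq_lintegral_mul _ (measurable_exponentialPDF h₂)
      (Antitone.measurable (fun a b hab => measure_mono (Set.Ici_subset_Ici.2 (by linarith))))]
  have h2 : ∀ y : ℝ, (exponentialPDF h₂ * fun y => expMeasure h₁ (Ici (y + d))) y
      = ENNReal.ofReal (exp (-(h₁ * d)) * (h₂ / (h₁ + h₂))) * exponentialPDF (h₁ + h₂) y := by
    intro y
    rcases lt_or_ge y 0 with hy | hy
    · simp [Pi.mul_apply, exponentialPDF_of_neg hy]
    · rw [Pi.mul_apply, exponentialPDF_of_nonneg hy, exponentialPDF_of_nonneg hy,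
        expMeasure_Ici hh₁ (by linarith), ← ENNReal.ofReal_mul (by positivity),
        ← ENNReal.ofReal_mul (by positivity)]
      congr 1
      have h3 : h₁ + h₂ ≠ 0 := by positivity
      rw [mul_assoc, ← Real.exp_add,
        show -(h₂ * y) + -(h₁ * (y + d)) = -(h₁ * d) + -((h₁ + h₂) * y) by ring, Real.exp_add]
      rw [show rexp (-(h₁ * d)) * (h₂ / (h₁ + h₂)) * ((h₁ + h₂) * rexp (-((h₁ + h₂) * y)))
          = h₂ / (h₁ + h₂) * (h₁ + h₂) * (rexp (-(h₁ * d)) * rexp (-((h₁ + h₂) * y))) by ring,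
        div_mul_cancel₀ _ h3]
  rw [lintegral_congr h2, lintegral_const_mul _ (measurable_exponentialPDF _),
    lintegral_exponentialPDF_eq_one (by positivity), mul_one]

/-- **Unfairness in the two-miner coordinated setting under strict latency
inequality.** If `X₁, X₂` are independent exponential random variables with rates
`h₁, h₂ > 0` and `0 ≤ d₁ < d₂` are shifts, then the closer miner wins strictly more
than its fair share: `P(X₁ + d₁ ≤ X₂ + d₂) > h₁/(h₁+h₂)`, and the farther miner
strictly less: `P(X₂ + d₂ ≤ X₁ + d₁) < h₂/(h₁+h₂)`. -/
theorem unfairness_two_miners_strict_latency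
    {Ω : Type*} [MeasurableSpace Ω] (μ : Measure Ω) [IsProbabilityMeasure μ]
    (h₁ h₂ : ℝ) (hh₁ : 0 < h₁) (hh₂ : 0 < h₂)
    (d₁ d₂ : ℝ) (hd₁ : 0 ≤ d₁) (hd₁₂ : d₁ < d₂)
    (X₁ X₂ : Ω → ℝ) (hX₁ : Measurable X₁) (hX₂ : Measurable X₂)
    (hindep : IndepFun X₁ X₂ μ)
    (hlaw₁ : μ.map X₁ = expMeasure h₁) (hlaw₂ : μ.map X₂ = expMeasure h₂) :
    (μ {ω | X₁ ω + d₁ ≤ X₂ ω + d₂}).toReal > h₁ / (h₁ + h₂) ∧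
      (μ {ω | X₂ ω + d₂ ≤ X₁ ω + d₁}).toReal < h₂ / (h₁ + h₂) := by
  set d : ℝ := d₂ - d₁ with hdd
  have hd : 0 < d := by simp only [hdd]; linarith
  have hsum : 0 < h₁ + h₂ := by positivity
  have hS : MeasurableSet {p : ℝ × ℝ | p.2 + d ≤ p.1} :=
    measurableSet_le (measurable_snd.add_const d) measurable_fst
  have hmap : μ.map (fun ω => (X₁ ω, X₂ ω)) = (expMeasure h₁).prod (expMeasure h₂) := by
    rw [← hlaw₁, ← hlaw₂]
    exact (indepFun_iff_map_prod_eq_prod_map_map hX₁.aemeasurable hX₂.aemeasurable).mp hindep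
  have hB : μ {ω | X₂ ω + d₂ ≤ X₁ ω + d₁}
      = ENNReal.ofReal (rexp (-(h₁ * d)) * (h₂ / (h₁ + h₂))) := by
    have hset : {ω | X₂ ω + d₂ ≤ X₁ ω + d₁}
        = (fun ω => (X₁ ω, X₂ ω)) ⁻¹' {p : ℝ × ℝ | p.2 + d ≤ p.1} := by
      ext ω
      simp only [Set.mem_setOf_eq, Set.mem_preimage, hdd]
      constructor <;> intro h <;> linarith
    rw [hset, ← Measure.map_apply (hX₁.prodMk hX₂) hS, hmap,
      key_prod h₁ h₂ d hh₁ hh₂ hd.le]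
  have hBlt : (μ {ω | X₂ ω + d₂ ≤ X₁ ω + d₁}).toReal < h₂ / (h₁ + h₂) := by
    rw [hB, ENNReal.toReal_ofReal (by positivity)]
    have he : rexp (-(h₁ * d)) < 1 := by
      rw [Real.exp_lt_one_iff]; nlinarith
    have hp : 0 < h₂ / (h₁ + h₂) := div_pos hh₂ hsum
    nlinarith [Real.exp_pos (-(h₁ * d))]
  refine ⟨?_, hBlt⟩
  have hunion : {ω | X₁ ω + d₁ ≤ X₂ ω + d₂} ∪ {ω | X₂ ω + d₂ ≤ X₁ ω + d₁}
      = Set.univ := by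
    ext ω; simp [le_total]
  have hle : (1 : ℝ≥0∞) ≤ μ {ω | X₁ ω + d₁ ≤ X₂ ω + d₂} + μ {ω | X₂ ω + d₂ ≤ X₁ ω + d₁} := by
    calc (1 : ℝ≥0∞) = μ Set.univ := (measure_univ).symm
      _ = μ ({ω | X₁ ω + d₁ ≤ X₂ ω + d₂} ∪ {ω | X₂ ω + d₂ ≤ X₁ ω + d₁}) := by rw [hunion]
      _ ≤ _ := measure_union_le _ _
  have hle' : (1 : ℝ) ≤ (μ {ω | X₁ ω + d₁ ≤ X₂ ω + d₂}).toReal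
      + (μ {ω | X₂ ω + d₂ ≤ X₁ ω + d₁}).toReal := by
    have h2 := ENNReal.toReal_mono
      (ENNReal.add_ne_top.mpr ⟨measure_ne_top _ _, measure_ne_top _ _⟩) hle
    rwa [ENNReal.toReal_one, ENNReal.toReal_add (measure_ne_top _ _) (measure_ne_top _ _)] at h2
  have hkey : h₁ / (h₁ + h₂) + h₂ / (h₁ + h₂) = 1 := by field_simp
  linarith
end

section
/- Two miners that are equidistant from the coordinator have the same individual efficiency, irrespective of their computational capacities. Precisely: let X_1,…,X_n be independent exponential random variables with rates h_1,…,h_n > 0 and shifts d_1,…,d_n ≥ 0, and suppose d_i = d_j for two indices i ≠ j. Then P( X_i + d_i ≤ X_k + d_k for all k ) / h_i = P( X_j + d_j ≤ X_k + d_k for all k ) / h_j; that is, p_i/h_i = p_j/h_j, so the individual efficiencies η_i^C = (p_i/τ̄)/h_i and η_j^C = (p_j/τ̄)/h_j are equal. -/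
open MeasureTheory ProbabilityTheory Real
open scoped ENNReal

section Aux
open Set

/-- auxiliary integral, symmetric in the rate. -/
noncomputable def expKfun (m : EReal) (r : ℝ) : ℝ≥0∞ :=
  ∫⁻ u, Set.indicator {u : ℝ | 0 ≤ u ∧ (u : EReal) ≤ m}
    (fun u => ENNReal.ofReal (rexp (-(r * u)))) u

lemma expMset_meas (m : EReal) : MeasurableSet {u : ℝ | (u : EReal) ≤ m} :=
  measurable_coe_real_ereal measurableSet_Iic

lemma exp_tail {b : ℝ} (hb : 0 < b) (u : ℝ) :
    expMeasure b (Ici u) = ENNReal.ofReal (rexp (-(b * max u 0))) := by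
  haveI := isProbabilityMeasure_expMeasure hb
  have hIic : expMeasure b (Iic u) = ENNReal.ofReal (if 0 ≤ u then 1 - rexp (-(b * u)) else 0) := by
    rw [expMeasure, gammaMeasure, withDensity_apply _ measurableSet_Iic]
    exact lintegral_exponentialPDF_eq_antiDeriv hb u
  have hpt : expMeasure b {u} = 0 :=
    (withDensity_absolutelyContinuous volume _) (measure_singleton u)
  have hIio : expMeasure b (Iio u) = ENNReal.ofReal (if 0 ≤ u then 1 - rexp (-(b * u)) else 0) := by
    have h1 : expMeasure b (Iio u ∪ {u}) ≤ expMeasure b (Iio u) :=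
      le_trans (measure_union_le _ _) (by rw [hpt, add_zero])
    have h2 : expMeasure b (Iio u) ≤ expMeasure b (Iio u ∪ {u}) :=
      measure_mono subset_union_left
    rw [← hIic, ← Iio_union_right]
    exact le_antisymm h2 h1
  have hcompl : expMeasure b (Ici u) = 1 - expMeasure b (Iio u) := by
    rw [← compl_Iio, measure_compl measurableSet_Iio (measure_ne_top _ _), measure_univ]
  rw [hcompl, hIio]
  rcases le_or_gt 0 u with hu | hu
  · rw [if_pos hu, max_eq_left hu, ← ENNReal.ofReal_one,
      ← ENNReal.ofReal_sub _ (by nlinarith [exp_le_one_iff.2 (by nlinarith : -(b*u) ≤ 0)])]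
    ring_nf
  · rw [if_neg (not_le.2 hu), max_eq_right hu.le]
    simp

lemma exp_core {a b : ℝ} (ha : 0 < a) (hb : 0 < b) (m : EReal) :
    ∫⁻ u, Set.indicator {u : ℝ | (u : EReal) ≤ m}
        (fun u => expMeasure b (Ici u)) u ∂expMeasure a
    = ENNReal.ofReal a * expKfun m (a + b) := by
  have hexp : expMeasure a = volume.withDensity (exponentialPDF a) := rfl
  have h1 : (fun u => Set.indicator {u : ℝ | (u : EReal) ≤ m}
      (fun u => expMeasure b (Ici u)) u)
      = fun u => Set.indicator {u : ℝ | (u : EReal) ≤ m}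
      (fun u => ENNReal.ofReal (rexp (-(b * max u 0)))) u := by
    funext u
    by_cases hu : u ∈ {u : ℝ | (u : EReal) ≤ m}
    · rw [Set.indicator_of_mem hu, Set.indicator_of_mem hu, exp_tail hb]
    · rw [Set.indicator_of_notMem hu, Set.indicator_of_notMem hu]
  have hGmeas : Measurable fun u : ℝ => Set.indicator {u : ℝ | (u : EReal) ≤ m}
      (fun u => ENNReal.ofReal (rexp (-(b * max u 0)))) u := by
    refine Measurable.indicator ?_ (expMset_meas m)
    exact (Real.continuous_exp.comp ((continuous_const.mul (continuous_id.max
      continuous_const)).neg)).measurable.ennreal_ofReal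
  have hpdf : Measurable (exponentialPDF a) :=
    (measurable_exponentialPDFReal a).ennreal_ofReal
  rw [h1, hexp, lintegral_withDensity_eq_lintegral_mul volume hpdf hGmeas]
  have h2 : (fun u => (exponentialPDF a * fun u : ℝ => Set.indicator
      {u : ℝ | (u : EReal) ≤ m} (fun u => ENNReal.ofReal (rexp (-(b * max u 0)))) u) u)
      = fun u => ENNReal.ofReal a * Set.indicator {u : ℝ | 0 ≤ u ∧ (u : EReal) ≤ m}
      (fun u => ENNReal.ofReal (rexp (-((a + b) * u)))) u := by
    funext u
    simp only [Pi.mul_apply]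
    by_cases h0 : 0 ≤ u
    · by_cases hm : (u : EReal) ≤ m
      · rw [Set.indicator_of_mem (by exact hm), Set.indicator_of_mem (by exact ⟨h0, hm⟩),
          exponentialPDF_of_nonneg h0, max_eq_left h0,
          ← ENNReal.ofReal_mul (by positivity), ← ENNReal.ofReal_mul ha.le]
        rw [mul_assoc, ← Real.exp_add]
        ring_nf
      · rw [Set.indicator_of_notMem (by exact hm),
          Set.indicator_of_notMem (fun hc => hm hc.2), mul_zero, mul_zero]
    · rw [exponentialPDF_of_neg (not_le.1 h0), zero_mul,
        Set.indicator_of_notMem (fun hc => h0 hc.1), mul_zero]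
  rw [h2, lintegral_const_mul]
  · rfl
  · refine Measurable.indicator ?_
      ((measurableSet_Ici.preimage measurable_id).inter (expMset_meas m))
    exact (Real.continuous_exp.comp
      (continuous_const.mul continuous_id).neg).measurable.ennreal_ofReal

lemma exp_inner_eval {b : ℝ} (hb : 0 < b) (u : ℝ) (m : EReal) :
    ∫⁻ v, Set.indicator {v : ℝ | u ≤ v ∧ (u : EReal) ≤ m} (1 : ℝ → ℝ≥0∞) v ∂expMeasure b
      = Set.indicator {u : ℝ | (u : EReal) ≤ m} (fun u => expMeasure b (Ici u)) u := by
  by_cases hm : (u : EReal) ≤ m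
  · have hset : {v : ℝ | u ≤ v ∧ (u : EReal) ≤ m} = Ici u := by
      ext v; simp [hm, mem_Ici]
    rw [hset, lintegral_indicator_one measurableSet_Ici,
      Set.indicator_of_mem (s := {u : ℝ | (u : EReal) ≤ m}) hm]
  · have hset : {v : ℝ | u ≤ v ∧ (u : EReal) ≤ m} = (∅ : Set ℝ) := by
      ext v; simp [hm]
    rw [hset, Set.indicator_of_notMem (s := {u : ℝ | (u : EReal) ≤ m}) hm]
    simp

lemma lmarginal_cmul {δ : Type*} [DecidableEq δ] {p : δ → Type*}
    [∀ i, MeasurableSpace (p i)] (μ : ∀ i, Measure (p i)) (s : Finset δ)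
    {f : (∀ i, p i) → ℝ≥0∞} (hf : Measurable f) (c : ℝ≥0∞) :
    MeasureTheory.lmarginal μ s (fun x => c * f x)
      = fun x => c * MeasureTheory.lmarginal μ s f x := by
  ext x
  exact lintegral_const_mul c (hf.comp measurable_updateFinset)

end Aux

/-- **Equidistant miners have equal individual efficiency (Corollary 6).**
If `X 0, …, X (n-1)` are independent exponential random variables with rates
`h 0, …, h (n-1) > 0` and nonnegative shifts `d`, and two indices `i ≠ j` satisfy
`d i = d j`, then `p i / h i = p j / h j`, where `p i` is the probability that
`X i + d i ≤ X k + d k` for all `k`; hence the individual efficiencies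
`η_i = (p i/τ̄)/h i` and `η_j = (p j/τ̄)/h j` coincide, irrespective of the
capacities. -/
theorem equidistant_miners_equal_efficiency
    {Ω : Type*} [MeasurableSpace Ω] (μ : Measure Ω) [IsProbabilityMeasure μ]
    (n : ℕ) (h d : Fin n → ℝ)
    (hh : ∀ k, 0 < h k) (hd : ∀ k, 0 ≤ d k)
    (X : Fin n → Ω → ℝ) (hXm : ∀ k, Measurable (X k))
    (hindep : iIndepFun X μ)
    (hlaw : ∀ k, μ.map (X k) = expMeasure (h k))
    (i j : Fin n) (hij : i ≠ j) (hdij : d i = d j) :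
    (μ {ω | ∀ k : Fin n, X i ω + d i ≤ X k ω + d k}).toReal / h i =
      (μ {ω | ∀ k : Fin n, X j ω + d j ≤ X k ω + d k}).toReal / h j := by
  classical
  haveI hprob : ∀ k : Fin n, IsProbabilityMeasure (expMeasure (h k)) :=
    fun k => isProbabilityMeasure_expMeasure (hh k)
  set ν : Fin n → Measure ℝ := fun k => expMeasure (h k) with hν
  haveI : ∀ k, SigmaFinite (ν k) := fun k => inferInstance
  set J : Ω → (Fin n → ℝ) := fun ω k => X k ω with hJdef
  have hJ : Measurable J := measurable_pi_lambda _ hXm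
  have hmapJ : Measure.pi ν = μ.map J := by
    refine Measure.pi_eq ?_
    intro s hs
    rw [Measure.map_apply hJ (MeasurableSet.univ_pi hs)]
    have hpre : J ⁻¹' (Set.pi Set.univ s) = ⋂ k ∈ Finset.univ, X k ⁻¹' s k := by
      ext ω; simp [hJdef, Set.mem_pi]
    rw [hpre, hindep.measure_inter_preimage_eq_mul Finset.univ (fun k _ => hs k)]
    refine Finset.prod_congr rfl fun k _ => ?_
    simp only [hν]
    rw [← hlaw k, Measure.map_apply (hXm k) (hs k)]
  set A : Fin n → Set (Fin n → ℝ) := fun l => {x | ∀ k, x l + d l ≤ x k + d k} with hAdef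
  have hA : ∀ l, MeasurableSet (A l) := by
    intro l
    have : A l = ⋂ k, {x : Fin n → ℝ | x l + d l ≤ x k + d k} := by
      ext x; simp [hAdef, Set.mem_iInter]
    rw [this]
    exact MeasurableSet.iInter fun k =>
      measurableSet_le ((measurable_pi_apply l).add_const _)
        ((measurable_pi_apply k).add_const _)
  have hev : ∀ l, μ {ω | ∀ k, X l ω + d l ≤ X k ω + d k} = Measure.pi ν (A l) := by
    intro l
    rw [hmapJ, Measure.map_apply hJ (hA l)]
    rfl
  have hIndMeas : ∀ l, Measurable fun x => (A l).indicator (1 : (Fin n → ℝ) → ℝ≥0∞) x :=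
    fun l => measurable_one.indicator (hA l)
  -- the key identity
  have key : ENNReal.ofReal (h j) * Measure.pi ν (A i)
      = ENNReal.ofReal (h i) * Measure.pi ν (A j) := by
    have hf : Measurable fun x => ENNReal.ofReal (h j) * (A i).indicator 1 x :=
      (hIndMeas i).const_mul _
    have hg : Measurable fun x => ENNReal.ofReal (h i) * (A j).indicator 1 x :=
      (hIndMeas j).const_mul _
    have marg : MeasureTheory.lmarginal ν ({i, j})
          (fun x => ENNReal.ofReal (h j) * (A i).indicator 1 x)
        = MeasureTheory.lmarginal ν ({i, j})
          (fun x => ENNReal.ofReal (h i) * (A j).indicator 1 x) := by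
      rw [lmarginal_cmul ν _ (hIndMeas i), lmarginal_cmul ν _ (hIndMeas j)]
      funext x
      -- the common infimum bound
      set M : EReal := ⨅ k : {k : Fin n // k ≠ i ∧ k ≠ j}, ((x k + d k - d i : ℝ) : EReal)
        with hMdef
      have hMle : ∀ u : ℝ, (u : EReal) ≤ M ↔ ∀ k, k ≠ i → k ≠ j → u ≤ x k + d k - d i := by
        intro u
        rw [hMdef, le_iInf_iff]
        constructor
        · intro H k hki hkj
          exact EReal.coe_le_coe_iff.1 (H ⟨k, hki, hkj⟩)
        · rintro H ⟨k, hki, hkj⟩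
          exact EReal.coe_le_coe_iff.2 (H k hki hkj)
      -- left side
      have hL : MeasureTheory.lmarginal ν {i, j}
          (fun x => (A i).indicator (1 : (Fin n → ℝ) → ℝ≥0∞) x) x
          = ENNReal.ofReal (h i) * expKfun M (h i + h j) := by
        have h1 : ({i, j} : Finset (Fin n)) = insert i {j} := rfl
        rw [h1, MeasureTheory.lmarginal_insert _ (hIndMeas i) (by simp [hij]) x]
        have h2 : ∀ u : ℝ, MeasureTheory.lmarginal ν {j}
            (fun x => (A i).indicator 1 x) (Function.update x i u)
            = Set.indicator {u : ℝ | (u : EReal) ≤ M}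
                (fun u => expMeasure (h j) (Set.Ici u)) u := by
          intro u
          rw [MeasureTheory.lmarginal_singleton]
          have h3 : (fun v => (A i).indicator (1 : (Fin n → ℝ) → ℝ≥0∞)
                (Function.update (Function.update x i u) j v))
              = fun v => Set.indicator {v : ℝ | u ≤ v ∧ (u : EReal) ≤ M} 1 v := by
            funext v
            have hyi : Function.update (Function.update x i u) j v i = u := by
              rw [Function.update_of_ne hij, Function.update_self]
            have hmem : Function.update (Function.update x i u) j v ∈ A i
                ↔ (u ≤ v ∧ (u : EReal) ≤ M) := by
              simp only [hAdef, Set.mem_setOf_eq]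
              constructor
              · intro H
                refine ⟨?_, (hMle u).2 fun k hki hkj => ?_⟩
                · have := H j
                  rw [hyi, Function.update_self, hdij] at this
                  linarith
                · have := H k
                  rw [hyi, Function.update_of_ne hkj, Function.update_of_ne hki] at this
                  linarith
              · rintro ⟨h1, h2⟩ k
                rw [hyi]
                rcases eq_or_ne k i with rfl | hki
                · rw [hyi]
                rcases eq_or_ne k j with rfl | hkj
                · rw [Function.update_self, hdij]
                  linarith
                · rw [Function.update_of_ne hkj, Function.update_of_ne hki]
                  have := (hMle u).1 h2 k hki hkj
                  linarith
            by_cases hc : u ≤ v ∧ (u : EReal) ≤ M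
            · rw [Set.indicator_of_mem (hmem.2 hc),
                Set.indicator_of_mem (s := {v : ℝ | u ≤ v ∧ (u : EReal) ≤ M}) hc]
              rfl
            · rw [Set.indicator_of_notMem (fun hx => hc (hmem.1 hx)),
                Set.indicator_of_notMem (s := {v : ℝ | u ≤ v ∧ (u : EReal) ≤ M}) hc]
          have h4 : ∫⁻ v, (A i).indicator (1 : (Fin n → ℝ) → ℝ≥0∞)
                (Function.update (Function.update x i u) j v) ∂ν j
              = ∫⁻ v, Set.indicator {v : ℝ | u ≤ v ∧ (u : EReal) ≤ M} 1 v ∂ν j :=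
            lintegral_congr fun v => congrFun h3 v
          exact h4.trans (exp_inner_eval (hh j) u M)
        simp_rw [h2]
        exact exp_core (hh i) (hh j) M
      -- right side
      have hR : MeasureTheory.lmarginal ν {i, j}
          (fun x => (A j).indicator (1 : (Fin n → ℝ) → ℝ≥0∞) x) x
          = ENNReal.ofReal (h j) * expKfun M (h j + h i) := by
        have h1 : ({i, j} : Finset (Fin n)) = insert j {i} := by
          rw [Finset.pair_comm]
        rw [h1, MeasureTheory.lmarginal_insert _ (hIndMeas j) (by simp [hij.symm]) x]
        have h2 : ∀ v : ℝ, MeasureTheory.lmarginal ν {i}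
            (fun x => (A j).indicator 1 x) (Function.update x j v)
            = Set.indicator {v : ℝ | (v : EReal) ≤ M}
                (fun v => expMeasure (h i) (Set.Ici v)) v := by
          intro v
          rw [MeasureTheory.lmarginal_singleton]
          have h3 : (fun u => (A j).indicator (1 : (Fin n → ℝ) → ℝ≥0∞)
                (Function.update (Function.update x j v) i u))
              = fun u => Set.indicator {u : ℝ | v ≤ u ∧ (v : EReal) ≤ M} 1 u := by
            funext u
            have hyj : Function.update (Function.update x j v) i u j = v := by
              rw [Function.update_of_ne hij.symm, Function.update_self]
            have hmem : Function.update (Function.update x j v) i u ∈ A j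
                ↔ (v ≤ u ∧ (v : EReal) ≤ M) := by
              simp only [hAdef, Set.mem_setOf_eq]
              constructor
              · intro H
                refine ⟨?_, (hMle v).2 fun k hki hkj => ?_⟩
                · have := H i
                  rw [hyj, Function.update_self, hdij] at this
                  linarith
                · have := H k
                  rw [hyj, Function.update_of_ne hki, Function.update_of_ne hkj] at this
                  rw [hdij] at *
                  linarith
              · rintro ⟨h1, h2⟩ k
                rw [hyj]
                rcases eq_or_ne k j with rfl | hkj
                · rw [hyj]
                rcases eq_or_ne k i with rfl | hki
                · rw [Function.update_self, hdij]
                  linarith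
                · rw [Function.update_of_ne hki, Function.update_of_ne hkj]
                  have := (hMle v).1 h2 k hki hkj
                  rw [hdij] at this
                  linarith
            by_cases hc : v ≤ u ∧ (v : EReal) ≤ M
            · rw [Set.indicator_of_mem (hmem.2 hc),
                Set.indicator_of_mem (s := {u : ℝ | v ≤ u ∧ (v : EReal) ≤ M}) hc]
              rfl
            · rw [Set.indicator_of_notMem (fun hx => hc (hmem.1 hx)),
                Set.indicator_of_notMem (s := {u : ℝ | v ≤ u ∧ (v : EReal) ≤ M}) hc]
          have h4 : ∫⁻ u, (A j).indicator (1 : (Fin n → ℝ) → ℝ≥0∞)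
                (Function.update (Function.update x j v) i u) ∂ν i
              = ∫⁻ u, Set.indicator {u : ℝ | v ≤ u ∧ (v : EReal) ≤ M} 1 u ∂ν i :=
            lintegral_congr fun u => congrFun h3 u
          exact h4.trans (exp_inner_eval (hh i) v M)
        simp_rw [h2]
        exact exp_core (hh j) (hh i) M
      rw [hL, hR, add_comm (h j) (h i)]
      ring
    have := MeasureTheory.lintegral_eq_of_lmarginal_eq (μ := ν) ({i, j}) hf hg marg
    rwa [lintegral_const_mul _ (hIndMeas i), lintegral_const_mul _ (hIndMeas j),
      lintegral_indicator_one (hA i), lintegral_indicator_one (hA j)] at this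
  rw [hev i, hev j]
  have hfin : ∀ l, Measure.pi ν (A l) ≠ ⊤ := fun l => measure_ne_top _ _
  have key' : h j * (Measure.pi ν (A i)).toReal = h i * (Measure.pi ν (A j)).toReal := by
    have := congrArg ENNReal.toReal key
    rwa [ENNReal.toReal_mul, ENNReal.toReal_mul, ENNReal.toReal_ofReal (hh j).le,
      ENNReal.toReal_ofReal (hh i).le] at this
  rw [div_eq_div_iff (hh i).ne' (hh j).ne']
  linarith
end

section
/- A miner strictly closer to the coordinator has strictly higher individual efficiency, irrespective of the compute-capacity distribution. Precisely: let X_1,…,X_n be independent exponential random variables with rates h_1,…,h_n > 0 and shifts d_1,…,d_n ≥ 0, and suppose d_i < d_j for two indices i ≠ j. Then P( X_i + d_i ≤ X_k + d_k for all k ) / h_i > P( X_j + d_j ≤ X_k + d_k for all k ) / h_j; that is, p_i/h_i > p_j/h_j, hence η_i^C > η_j^C. -/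
open MeasureTheory ProbabilityTheory Real

open scoped ENNReal NNReal

section CloserMinerAuxSection
open Set

namespace CloserMinerAux

lemma measurable_inf' {ι Ω : Type*} [MeasurableSpace Ω] (s : Finset ι) (hs : s.Nonempty)
    (f : ι → Ω → ℝ) (hf : ∀ i, Measurable (f i)) :
    Measurable (fun ω => s.inf' hs fun i => f i ω) := by
  induction hs using Finset.Nonempty.cons_induction with
  | singleton i => simpa using hf i
  | cons i s hi hs ih => simp only [Finset.inf'_cons (H := hs)]; exact (hf i).min ih

lemma ofReal_max_zero (x : ℝ) : ENNReal.ofReal (max x 0) = ENNReal.ofReal x := by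
  rcases le_total x 0 with hx | hx
  · rw [max_eq_right hx, ENNReal.ofReal_of_nonpos hx, ENNReal.ofReal_zero]
  · rw [max_eq_left hx]

lemma expMeasure_Ioi {r : ℝ} (hr : 0 < r) {x : ℝ} (hx : 0 ≤ x) :
    expMeasure r (Ioi x) = ENNReal.ofReal (rexp (-(r * x))) := by
  have hP := isProbabilityMeasure_expMeasure hr
  have h1 : expMeasure r (Iic x) = ENNReal.ofReal (1 - rexp (-(r * x))) := by
    have : expMeasure r (Iic x) = ∫⁻ y in Iic x, exponentialPDF r y := by
      rw [expMeasure, gammaMeasure, withDensity_apply _ measurableSet_Iic]; rfl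
    rw [this, lintegral_exponentialPDF_eq_antiDeriv hr x, if_pos hx]
  have he : rexp (-(r * x)) ≤ 1 := by
    rw [exp_le_one_iff]; nlinarith
  have h2 : Ioi x = (Iic x)ᶜ := (compl_Iic).symm
  rw [h2, prob_compl_eq_one_sub measurableSet_Iic, h1]
  rw [show (1 : ℝ≥0∞) = ENNReal.ofReal 1 by simp, ← ENNReal.ofReal_sub 1 (by linarith)]
  norm_num

lemma expMeasure_singleton {r : ℝ} (c : ℝ) : expMeasure r {c} = 0 := by
  rw [expMeasure, gammaMeasure]
  exact (withDensity_absolutelyContinuous _ _) (Real.volume_singleton)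

end CloserMinerAux

namespace CloserMinerAux

/-- The shifted minimum `min_k (X k ω + d k)`; the index `a` only provides nonemptiness. -/
noncomputable def Mfun {Ω : Type*} (n : ℕ) (d : Fin n → ℝ) (X : Fin n → Ω → ℝ) (a : Fin n)
    (ω : Ω) : ℝ :=
  Finset.univ.inf' ⟨a, Finset.mem_univ a⟩ (fun k => X k ω + d k)

lemma key {Ω : Type*} [MeasurableSpace Ω] (μ : Measure Ω) [IsProbabilityMeasure μ]
    (n : ℕ) (h d : Fin n → ℝ) (hh : ∀ k, 0 < h k)
    (X : Fin n → Ω → ℝ) (hXm : ∀ k, Measurable (X k))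
    (hindep : iIndepFun X μ)
    (hlaw : ∀ k, μ.map (X k) = expMeasure (h k))
    (a b : Fin n) (hba : b ≠ a) :
    μ {ω | ∀ k : Fin n, X a ω + d a ≤ X k ω + d k}
      = ENNReal.ofReal (h a) * ∫⁻ ω, ENNReal.ofReal (Mfun n d X a ω - d a) ∂μ := by
  classical
  set T : Finset (Fin n) := Finset.univ.erase a with hTdef
  have hbT : b ∈ T := Finset.mem_erase.mpr ⟨hba, Finset.mem_univ b⟩
  have hT : T.Nonempty := ⟨b, hbT⟩
  set Y : Ω → ℝ := fun ω => T.inf' hT (fun k => X k ω + d k) - d a with hYdef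
  have hYm : Measurable Y :=
    (measurable_inf' T hT _ (fun k => (hXm k).add_const (d k))).sub_const (d a)
  -- the winning event is `{X a ≤ Y}`
  have hset : {ω | ∀ k : Fin n, X a ω + d a ≤ X k ω + d k} = {ω | X a ω ≤ Y ω} := by
    ext ω
    simp only [mem_setOf_eq, hYdef, le_sub_iff_add_le, Finset.le_inf'_iff]
    constructor
    · exact fun H k _ => H k
    · intro H k
      by_cases hka : k = a
      · subst hka; exact le_rfl
      · exact H k (Finset.mem_erase.mpr ⟨hka, Finset.mem_univ k⟩)
  -- the min identity
  have hmin : ∀ ω, min (X a ω) (Y ω) = Mfun n d X a ω - d a := by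
    intro ω
    have hM : Mfun n d X a ω
        = min (X a ω + d a) (T.inf' hT (fun k => X k ω + d k)) := by
      apply le_antisymm
      · refine le_min (Finset.inf'_le _ (Finset.mem_univ a)) ?_
        exact Finset.le_inf' _ _ (fun k hk => Finset.inf'_le _ (Finset.mem_univ k))
      · apply Finset.le_inf'
        intro k _
        by_cases hka : k = a
        · subst hka; exact min_le_left _ _
        · exact le_trans (min_le_right _ _)
            (Finset.inf'_le _ (Finset.mem_erase.mpr ⟨hka, Finset.mem_univ k⟩))
    rw [hM, ← min_sub_sub_right, add_sub_cancel_right]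
  -- independence of `X a` and `Y`
  have hD : IndepFun (X a) Y μ := by
    have hdisj : Disjoint ({a} : Finset (Fin n)) T :=
      Finset.disjoint_singleton_left.mpr (Finset.notMem_erase a _)
    have h1 := hindep.indepFun_finset {a} T hdisj hXm
    have hTne : Nonempty {x // x ∈ T} := ⟨⟨b, hbT⟩⟩
    have huniv : (Finset.univ : Finset {x // x ∈ T}).Nonempty := ⟨⟨b, hbT⟩, Finset.mem_univ _⟩
    set g : ({x // x ∈ T} → ℝ) → ℝ :=
      fun v => (Finset.univ.inf' huniv (fun k : {x // x ∈ T} => v k + d k)) - d a with hgdef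
    have hgm : Measurable g :=
      (measurable_inf' _ huniv _ (fun k => (measurable_pi_apply k).add_const _)).sub_const _
    have hφ : Measurable (fun v : ({x // x ∈ ({a} : Finset (Fin n))} → ℝ) =>
        v ⟨a, Finset.mem_singleton_self a⟩) := measurable_pi_apply _
    have h2 := h1.comp hφ hgm
    refine h2.congr (Filter.Eventually.of_forall fun ω => rfl)
      (Filter.Eventually.of_forall fun ω => ?_)
    show (Finset.univ.inf' huniv fun k : {x // x ∈ T} => X k ω + d k) - d a = Y ω
    rw [hYdef]
    congr 1
    apply le_antisymm
    · apply Finset.le_inf'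
      intro k hk
      exact Finset.inf'_le _ (Finset.mem_univ (⟨k, hk⟩ : {x // x ∈ T}))
    · apply Finset.le_inf'
      intro k _
      exact Finset.inf'_le _ k.2
  set ν : Measure ℝ := μ.map Y with hνdef
  haveI : IsProbabilityMeasure ν := Measure.isProbabilityMeasure_map hYm.aemeasurable
  haveI : IsProbabilityMeasure (expMeasure (h a)) := isProbabilityMeasure_expMeasure (hh a)
  -- `ν` has no atoms
  have hatom : ∀ x : ℝ, ν {x} = 0 := by
    intro x
    rw [hνdef, Measure.map_apply hYm (measurableSet_singleton x)]
    have hsub : Y ⁻¹' {x} ⊆ ⋃ k ∈ T, X k ⁻¹' {x + d a - d k} := by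
      intro ω hω
      obtain ⟨k, hk, hek⟩ := Finset.exists_mem_eq_inf' hT (fun k => X k ω + d k)
      have hYx : T.inf' hT (fun k => X k ω + d k) - d a = x := hω
      refine mem_iUnion₂.mpr ⟨k, hk, ?_⟩
      simp only [mem_preimage, mem_singleton_iff]
      rw [hek] at hYx
      linarith
    refine measure_mono_null hsub ?_
    refine (measure_biUnion_null_iff T.countable_toSet).mpr ?_
    intro k _
    rw [← Measure.map_apply (hXm k) (measurableSet_singleton _), hlaw k, expMeasure_singleton]
  have hIci : ∀ x : ℝ, ν (Ici x) = ν (Ioi x) := by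
    intro x
    refine le_antisymm ?_ (measure_mono Ioi_subset_Ici_self)
    calc ν (Ici x) ≤ ν (Ioi x ∪ {x}) := by
          refine measure_mono fun y hy => ?_
          rcases eq_or_lt_of_le (Set.mem_Ici.mp hy) with h' | h'
          · exact Or.inr (by simp [← h'])
          · exact Or.inl h'
      _ ≤ ν (Ioi x) + ν {x} := measure_union_le _ _
      _ = ν (Ioi x) := by rw [hatom x, add_zero]
  have hνIoi_meas : Measurable (fun x : ℝ => ν (Ioi x)) := by
    have : Antitone (fun x : ℝ => ν (Ioi x)) :=
      fun x y hxy => measure_mono (Ioi_subset_Ioi hxy)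
    exact this.measurable
  -- LHS computation
  have hps : MeasurableSet {p : ℝ × ℝ | p.1 ≤ p.2} :=
    measurableSet_le measurable_fst measurable_snd
  have hL : μ {ω | ∀ k : Fin n, X a ω + d a ≤ X k ω + d k}
      = ∫⁻ x in Ioi (0 : ℝ), ENNReal.ofReal (h a * rexp (-(h a * x))) * ν (Ioi x) := by
    rw [hset]
    have hpair : μ {ω | X a ω ≤ Y ω} = ((expMeasure (h a)).prod ν) {p : ℝ × ℝ | p.1 ≤ p.2} := by
      rw [← hlaw a, hνdef,
        ← (indepFun_iff_map_prod_eq_prod_map_map (hXm a).aemeasurable hYm.aemeasurable).mp hD,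
        Measure.map_apply ((hXm a).prodMk hYm) hps]
      rfl
    rw [hpair, Measure.prod_apply hps]
    have hpre : ∀ x : ℝ, (Prod.mk x ⁻¹' {p : ℝ × ℝ | p.1 ≤ p.2}) = Ici x := fun x => rfl
    simp_rw [hpre, hIci]
    have hpdfm : Measurable (exponentialPDF (h a)) := by
      unfold exponentialPDF
      exact (measurable_exponentialPDFReal (h a)).ennreal_ofReal
    rw [show expMeasure (h a) = volume.withDensity (exponentialPDF (h a)) from rfl,
      lintegral_withDensity_eq_lintegral_mul volume hpdfm hνIoi_meas]
    have hsplit := lintegral_add_compl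
      (fun x => (exponentialPDF (h a) * fun x => ν (Ioi x)) x) (measurableSet_Ioi (a := (0:ℝ)))
      (μ := volume)
    have hcompl : ∫⁻ x in (Ioi (0:ℝ))ᶜ, (exponentialPDF (h a) * fun x => ν (Ioi x)) x = 0 := by
      rw [compl_Ioi]
      have h0 : ∀ᵐ x : ℝ ∂volume, x ≠ 0 := by
        rw [ae_iff]
        simp only [not_not, setOf_eq_eq_singleton]
        exact Real.volume_singleton
      have hz : ∀ᵐ x ∂(volume.restrict (Iic (0:ℝ))),
          (exponentialPDF (h a) * fun x => ν (Ioi x)) x = 0 := by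
        filter_upwards [ae_restrict_of_ae h0, ae_restrict_mem measurableSet_Iic] with x hx0 hxle
        simp only [Pi.mul_apply]
        rw [exponentialPDF_of_neg (lt_of_le_of_ne hxle hx0), zero_mul]
      rw [lintegral_congr_ae hz, lintegral_zero]
    rw [← hsplit, hcompl, add_zero]
    refine setLIntegral_congr_fun measurableSet_Ioi (fun x hx => ?_)
    simp only [Pi.mul_apply]
    rw [exponentialPDF_of_nonneg (le_of_lt hx)]
  -- RHS computation
  have hR : ∫⁻ ω, ENNReal.ofReal (Mfun n d X a ω - d a) ∂μ
      = ∫⁻ t in Ioi (0 : ℝ), ENNReal.ofReal (rexp (-(h a * t))) * ν (Ioi t) := by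
    have hfm : Measurable (fun ω => max (min (X a ω) (Y ω)) 0) :=
      ((hXm a).min hYm).max measurable_const
    have h1 : ∀ ω, ENNReal.ofReal (Mfun n d X a ω - d a)
        = ENNReal.ofReal (max (min (X a ω) (Y ω)) 0) := by
      intro ω; rw [ofReal_max_zero, hmin ω]
    simp_rw [h1]
    rw [lintegral_eq_lintegral_meas_lt μ (f := fun ω => max (min (X a ω) (Y ω)) 0)
      (Filter.Eventually.of_forall fun ω => le_max_right _ _) hfm.aemeasurable]
    refine setLIntegral_congr_fun measurableSet_Ioi (fun t ht => ?_)
    have hts : {ω | t < max (min (X a ω) (Y ω)) 0} = X a ⁻¹' (Ioi t) ∩ Y ⁻¹' (Ioi t) := by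
      ext ω
      simp only [mem_setOf_eq, mem_inter_iff, mem_preimage, mem_Ioi]
      constructor
      · intro hlt
        have ht0 : (0 : ℝ) < t := ht
        have hm : t < min (X a ω) (Y ω) := by
          rcases le_or_gt (min (X a ω) (Y ω)) 0 with hm | hm
          · rw [max_eq_right hm] at hlt; linarith
          · rwa [max_eq_left hm.le] at hlt
        exact ⟨hm.trans_le (min_le_left _ _), hm.trans_le (min_le_right _ _)⟩
      · rintro ⟨h1, h2⟩
        exact lt_of_lt_of_le (lt_min h1 h2) (le_max_left _ _)
    rw [hts, hD.measure_inter_preimage_eq_mul _ _ measurableSet_Ioi measurableSet_Ioi]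
    have e1 : μ (X a ⁻¹' Ioi t) = ENNReal.ofReal (rexp (-(h a * t))) := by
      rw [← Measure.map_apply (hXm a) measurableSet_Ioi, hlaw a,
        expMeasure_Ioi (hh a) (le_of_lt (mem_Ioi.mp ht))]
    have e2 : μ (Y ⁻¹' Ioi t) = ν (Ioi t) := (Measure.map_apply hYm measurableSet_Ioi).symm
    rw [e1, e2]
  rw [hL, hR]
  have hmeas2 : Measurable (fun t : ℝ => ENNReal.ofReal (rexp (-(h a * t))) * ν (Ioi t)) := by
    refine Measurable.mul ?_ hνIoi_meas
    exact ((Real.continuous_exp.comp ((continuous_const.mul continuous_id).neg)).measurable).ennreal_ofReal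
  rw [← lintegral_const_mul _ hmeas2]
  refine lintegral_congr fun t => ?_
  rw [ENNReal.ofReal_mul (hh a).le, mul_assoc]

end CloserMinerAux

end CloserMinerAuxSection

open Set CloserMinerAux in
/-- **A strictly closer miner has strictly higher individual efficiency.**
If `X 0, …, X (n-1)` are independent exponential random variables with rates
`h 0, …, h (n-1) > 0` and nonnegative shifts `d`, and two indices `i ≠ j` satisfy
`d i < d j`, then `p i / h i > p j / h j`, where `p k` is the probability that
`X k + d k ≤ X m + d m` for all `m`; hence `η_i > η_j`, irrespective of the
compute-capacity distribution. -/
theorem closer_miner_strictly_higher_efficiency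
    {Ω : Type*} [MeasurableSpace Ω] (μ : Measure Ω) [IsProbabilityMeasure μ]
    (n : ℕ) (h d : Fin n → ℝ)
    (hh : ∀ k, 0 < h k) (hd : ∀ k, 0 ≤ d k)
    (X : Fin n → Ω → ℝ) (hXm : ∀ k, Measurable (X k))
    (hindep : iIndepFun X μ)
    (hlaw : ∀ k, μ.map (X k) = expMeasure (h k))
    (i j : Fin n) (hij : i ≠ j) (hdij : d i < d j) :
    (μ {ω | ∀ k : Fin n, X i ω + d i ≤ X k ω + d k}).toReal / h i >
      (μ {ω | ∀ k : Fin n, X j ω + d j ≤ X k ω + d k}).toReal / h j := by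
  classical
  have hki := key μ n h d hh X hXm hindep hlaw i j (Ne.symm hij)
  have hkj := key μ n h d hh X hXm hindep hlaw j i hij
  have hMj : Mfun n d X j = Mfun n d X i := rfl
  rw [hMj] at hkj
  set Ii := ∫⁻ ω, ENNReal.ofReal (Mfun n d X i ω - d i) ∂μ with hIidef
  set Ij := ∫⁻ ω, ENNReal.ofReal (Mfun n d X i ω - d j) ∂μ with hIjdef
  -- finiteness
  have hIi_ne : Ii ≠ ⊤ := by
    intro htop
    have h0 : ENNReal.ofReal (h i) ≠ 0 := (ENNReal.ofReal_pos.mpr (hh i)).ne'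
    rw [htop, ENNReal.mul_top h0] at hki
    exact (measure_ne_top μ _) hki
  have hle : ∀ ω, ENNReal.ofReal (Mfun n d X i ω - d j)
      ≤ ENNReal.ofReal (Mfun n d X i ω - d i) :=
    fun ω => ENNReal.ofReal_le_ofReal (by linarith)
  have hIj_ne : Ij ≠ ⊤ := ne_top_of_le_ne_top hIi_ne (lintegral_mono hle)
  -- measurability
  have hMm : Measurable (Mfun n d X i) :=
    measurable_inf' _ _ _ (fun k => (hXm k).add_const (d k))
  have hfmeas : Measurable (fun ω => ENNReal.ofReal (Mfun n d X i ω - d i)) :=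
    (hMm.sub_const _).ennreal_ofReal
  have hgmeas : Measurable (fun ω => ENNReal.ofReal (Mfun n d X i ω - d j)) :=
    (hMm.sub_const _).ennreal_ofReal
  have hdmeas : Measurable (fun ω =>
      ENNReal.ofReal (Mfun n d X i ω - d i) - ENNReal.ofReal (Mfun n d X i ω - d j)) :=
    hfmeas.sub hgmeas
  -- decomposition
  have hsum : Ii = Ij + ∫⁻ ω,
      (ENNReal.ofReal (Mfun n d X i ω - d i) - ENNReal.ofReal (Mfun n d X i ω - d j)) ∂μ := by
    rw [hIidef, hIjdef, ← lintegral_add_left hgmeas]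
    exact lintegral_congr fun ω => (add_tsub_cancel_of_le (hle ω)).symm
  -- strict positivity of the gap
  have hdiffpos : 0 < ∫⁻ ω,
      (ENNReal.ofReal (Mfun n d X i ω - d i) - ENNReal.ofReal (Mfun n d X i ω - d j)) ∂μ := by
    rw [lintegral_pos_iff_support hdmeas]
    have hA : (⋂ k, X k ⁻¹' (Ioi (d j))) ⊆ Function.support (fun ω =>
        ENNReal.ofReal (Mfun n d X i ω - d i) - ENNReal.ofReal (Mfun n d X i ω - d j)) := by
      intro ω hω
      have hMgt : d j < Mfun n d X i ω := by
        unfold Mfun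
        refine (Finset.lt_inf'_iff _).mpr fun k _ => ?_
        have hxk : d j < X k ω := mem_iInter.mp hω k
        have := hd k
        linarith
      have h1 : 0 < Mfun n d X i ω - d i := by linarith
      have hlt : ENNReal.ofReal (Mfun n d X i ω - d j)
          < ENNReal.ofReal (Mfun n d X i ω - d i) :=
        (ENNReal.ofReal_lt_ofReal_iff h1).mpr (by linarith)
      exact (tsub_pos_of_lt hlt).ne'
    refine lt_of_lt_of_le ?_ (measure_mono hA)
    have hprod := hindep.meas_iInter (s := fun k => X k ⁻¹' Ioi (d j))
      (fun k => ⟨Ioi (d j), measurableSet_Ioi, rfl⟩)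
    rw [hprod]
    refine CanonicallyOrderedAdd.prod_pos.mpr fun k _ => ?_
    rw [← Measure.map_apply (hXm k) measurableSet_Ioi, hlaw k,
      expMeasure_Ioi (hh k) (hd j)]
    exact ENNReal.ofReal_pos.mpr (exp_pos _)
  have hlt : Ij < Ii := by
    rw [hsum]
    exact ENNReal.lt_add_right hIj_ne hdiffpos.ne'
  -- conclusion
  rw [hki, hkj, ENNReal.toReal_mul, ENNReal.toReal_mul,
    ENNReal.toReal_ofReal (hh i).le, ENNReal.toReal_ofReal (hh j).le,
    mul_div_cancel_left₀ _ (hh i).ne', mul_div_cancel_left₀ _ (hh j).ne']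
  exact (ENNReal.toReal_lt_toReal hIj_ne hIi_ne).mpr hlt
end
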